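/- arXiv:2005.04759 — 3 statements merged into one kernel-verified Lean document; each statement's English description precedes it below -/
import Mathlib

section
/- Let z, a ∈ Z_+ with a > 1, n ≥ 1, and y = (a, 1, 1, ..., 1) ∈ (Z_+)^n. Then the set of permutation-invariant parking sequences for (y;z) equals the set of u-parking functions of length n for u = (z, z+1, ..., z+n-1), i.e., the sequences c whose order statistics satisfy c_{(i)} ≤ z+i-1 for all i. Consequently its cardinality is z(n+z)^{n-1}. -/
open Finset

/-- The first empty spot `j` with `c ≤ j ≤ M` (street spots are `1..M`). -/
def firstEmpty (occ : Finset ℕ) (M c : ℕ) : Option ℕ :=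
  (List.range' c (M + 1 - c)).find? (fun j => decide (j ∉ occ))

/-- Park cars with preferences `cs` and lengths `ys` on a street with spots `1..M`,
where `occ` is the set of already-occupied spots.  Returns the list of starting
spots of the cars (in order of entry) if all cars can park. -/
def parkAux (M : ℕ) : Finset ℕ → List ℕ → List ℕ → Option (List ℕ)
  | _, [], [] => some []
  | occ, c :: cs, y :: ys =>
    match firstEmpty occ M c with
    | none => none
    | some j =>
      if (∀ i ∈ Finset.Ico j (j + y), i ∉ occ) ∧ j + y - 1 ≤ M then
        (parkAux M (occ ∪ Finset.Ico j (j + y)) cs ys).map (j :: ·)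
      else none
  | _, _, _ => none

/-- Outcome of the parking process for length vector `ys`, preference sequence `cs`,
and trailer parameter `z` (the trailer occupies spots `1,…,z-1`); the street has
`z - 1 + ys.sum` spots. -/
def parkResult (ys cs : List ℕ) (z : ℕ) : Option (List ℕ) :=
  parkAux (z - 1 + ys.sum) (Finset.Ico 1 z) cs ys

/-- `cs` is a parking sequence for `(ys; z)`. -/
def IsParkingSeq (ys cs : List ℕ) (z : ℕ) : Prop :=
  cs.length = ys.length ∧ (∀ c ∈ cs, 1 ≤ c) ∧ (parkResult ys cs z).isSome = true

/-- Starting spots of the standard (no-gap, in order) final configuration. -/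
def standardStarts (z : ℕ) : List ℕ → List ℕ
  | [] => []
  | y :: ys => z :: standardStarts (z + y) ys

/-- `cs` parks `ys` in the standard order `T, C₁, …, Cₙ`. -/
def ParksStandard (ys cs : List ℕ) (z : ℕ) : Prop :=
  parkResult ys cs z = some (standardStarts z ys)

/-- `cs` is a permutation-invariant parking sequence for `(ys; z)`. -/
def PermInvariant (ys cs : List ℕ) (z : ℕ) : Prop :=
  ∀ cs' : List ℕ, cs'.Perm cs → IsParkingSeq ys cs' z

/-- `cs` is a strong parking sequence for `{ys; z}`. -/
def StrongParkingSeq (ys cs : List ℕ) (z : ℕ) : Prop :=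
  ∀ ys' : List ℕ, ys'.Perm ys → IsParkingSeq ys' cs z

/-- The nondecreasing rearrangement (order statistics) of a list. -/
def orderStats (l : List ℕ) : List ℕ :=
  Multiset.sort (l : Multiset ℕ) (· ≤ ·)

/-- `xs` is a `u`-parking function. -/
def IsUPF (u xs : List ℕ) : Prop :=
  xs.length = u.length ∧ (∀ x ∈ xs, 1 ≤ x) ∧
    ∀ i < u.length, (orderStats xs).getD i 0 ≤ u.getD i 0


def pkCnt (l : List ℕ) (s : ℕ) : ℕ := (l.filter (fun x => s ≤ x)).length
def pkFree (M : ℕ) (occ : Finset ℕ) (s : ℕ) : ℕ :=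
  ((Finset.Ico s (M+1)).filter (fun x => x ∉ occ)).card

lemma pk_find_range (p : ℕ → Bool) :
    ∀ k c j, ((List.range' c k).find? p = some j) ↔
      (c ≤ j ∧ j < c + k ∧ p j = true ∧ ∀ i, c ≤ i → i < j → p i = false) := by
  intro k
  induction k with
  | zero => intro c j; simp; omega
  | succ k ih =>
    intro c j
    rw [List.range'_succ, List.find?_cons]
    rcases hpc : p c with _ | _
    · simp only [cond_false]
      rw [ih]
      constructor
      · rintro ⟨h1, h2, h3, h4⟩
        refine ⟨by omega, by omega, h3, ?_⟩
        intro i hi1 hi2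
        rcases Nat.eq_or_lt_of_le hi1 with rfl | h
        · exact hpc
        · exact h4 i h hi2
      · rintro ⟨h1, h2, h3, h4⟩
        have hcj : c ≠ j := by rintro rfl; rw [hpc] at h3; cases h3
        refine ⟨by omega, by omega, h3, fun i hi1 hi2 => h4 i (by omega) hi2⟩
    · simp only [cond_true]
      constructor
      · rintro h; cases h
        exact ⟨le_refl _, by omega, hpc, fun i h1 h2 => by omega⟩
      · rintro ⟨h1, h2, h3, h4⟩
        rcases Nat.eq_or_lt_of_le h1 with rfl | h
        · rfl
        · have := h4 c (le_refl c) h; rw [hpc] at this; cases this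

lemma pk_firstEmpty_iff (occ : Finset ℕ) (M c j : ℕ) :
    firstEmpty occ M c = some j ↔
      (c ≤ j ∧ j ≤ M ∧ j ∉ occ ∧ ∀ i, c ≤ i → i < j → i ∈ occ) := by
  rw [firstEmpty, pk_find_range]
  constructor
  · rintro ⟨h1, h2, h3, h4⟩
    refine ⟨h1, by omega, by simpa using h3, fun i hi1 hi2 => ?_⟩
    have := h4 i hi1 hi2
    simpa using this
  · rintro ⟨h1, h2, h3, h4⟩
    refine ⟨h1, by omega, by simpa using h3, fun i hi1 hi2 => by simpa using h4 i hi1 hi2⟩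

lemma pk_firstEmpty_isSome (occ : Finset ℕ) (M c : ℕ) (x : ℕ)
    (hx : c ≤ x ∧ x ≤ M ∧ x ∉ occ) : ∃ j, firstEmpty occ M c = some j := by
  have : (firstEmpty occ M c).isSome := by
    rw [firstEmpty, List.find?_isSome]
    exact ⟨x, by rw [List.mem_range'_1]; omega, by simpa using hx.2.2⟩
  exact Option.isSome_iff_exists.mp this

lemma pk_cnt_cons (c : ℕ) (l : List ℕ) (s : ℕ) :
    pkCnt (c :: l) s = (if s ≤ c then 1 else 0) + pkCnt l s := by
  simp only [pkCnt, List.filter_cons]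
  split <;> rename_i h <;> simp at h <;> simp [h] <;> omega

lemma pk_cnt_le_length (l : List ℕ) (s : ℕ) : pkCnt l s ≤ l.length :=
  List.length_filter_le _ _

lemma pk_cnt_mono (l : List ℕ) {s s' : ℕ} (h : s ≤ s') : pkCnt l s' ≤ pkCnt l s := by
  simp only [pkCnt, ← List.countP_eq_length_filter]
  exact List.countP_mono_left (fun x _ hx => by simp at hx ⊢; omega)

lemma pk_cnt_perm {l l' : List ℕ} (h : l.Perm l') (s : ℕ) : pkCnt l s = pkCnt l' s := by
  simp only [pkCnt]
  exact (h.filter _).length_eq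

lemma pk_cnt_eq_zero {l : List ℕ} {s : ℕ} (h : ∀ x ∈ l, x < s) : pkCnt l s = 0 := by
  simp only [pkCnt, List.length_eq_zero_iff, List.filter_eq_nil_iff]
  intro x hx; simp; exact h x hx

lemma pk_cnt_pos {l : List ℕ} {s : ℕ} (h : 1 ≤ pkCnt l s) : ∃ x ∈ l, s ≤ x := by
  simp only [pkCnt] at h
  have hne : (l.filter (fun x => decide (s ≤ x))) ≠ [] := by
    intro hc; rw [hc] at h; simp at h
  rcases List.exists_mem_of_ne_nil _ hne with ⟨x, hx⟩
  rw [List.mem_filter] at hx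
  exact ⟨x, hx.1, by simpa using hx.2⟩

lemma pk_free_mono (M : ℕ) {occ occ' : Finset ℕ} (h : occ ⊆ occ') (s : ℕ) :
    pkFree M occ' s ≤ pkFree M occ s := by
  apply Finset.card_le_card
  apply Finset.monotone_filter_right
  intro x _ hx hmem
  exact hx (h hmem)

lemma pk_free_le (M : ℕ) (occ : Finset ℕ) (s : ℕ) : pkFree M occ s ≤ M + 1 - s := by
  calc pkFree M occ s ≤ (Finset.Ico s (M+1)).card := Finset.card_filter_le _ _
  _ = M + 1 - s := Nat.card_Ico _ _

lemma pk_free_split (M : ℕ) (occ : Finset ℕ) {j y s : ℕ}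
    (h1 : ∀ i ∈ Finset.Ico j (j + y), i ∉ occ) (h2 : j + y ≤ M + 1) (hs : s ≤ j) :
    pkFree M occ s = pkFree M (occ ∪ Finset.Ico j (j + y)) s + y := by
  have key : (Finset.Ico s (M+1)).filter (fun x => x ∉ occ)
      = (Finset.Ico s (M+1)).filter (fun x => x ∉ occ ∪ Finset.Ico j (j+y)) ∪ Finset.Ico j (j+y) := by
    ext x
    simp only [Finset.mem_filter, Finset.mem_union, Finset.mem_Ico, not_or]
    constructor
    · rintro ⟨h3, h4⟩
      by_cases hx : j ≤ x ∧ x < j + y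
      · right; exact hx
      · left; exact ⟨h3, h4, by omega⟩
    · rintro (⟨h3, h4, _⟩ | h3)
      · exact ⟨h3, h4⟩
      · exact ⟨⟨by omega, by omega⟩, h1 x (by simp [Finset.mem_Ico]; omega)⟩
  rw [pkFree, key, Finset.card_union_of_disjoint, Nat.card_Ico]
  · simp [pkFree]
  · rw [Finset.disjoint_right]
    intro x hx hx'
    simp only [Finset.mem_filter, Finset.mem_union, not_or] at hx'
    exact hx'.2.2 hx

lemma pk_free_eq_of_pred (M : ℕ) (occ : Finset ℕ) {c s : ℕ} (hcs : c ≤ s)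
    (h : ∀ i, c ≤ i → i < s → i ∈ occ) : pkFree M occ c = pkFree M occ s := by
  unfold pkFree
  congr 1
  ext x
  simp only [Finset.mem_filter, Finset.mem_Ico]
  constructor
  · rintro ⟨⟨h1, h2⟩, h3⟩
    have : s ≤ x := by
      by_contra hc
      exact h3 (h x h1 (by omega))
    exact ⟨⟨this, h2⟩, h3⟩
  · rintro ⟨⟨h1, h2⟩, h3⟩
    exact ⟨⟨by omega, h2⟩, h3⟩

lemma pk_free_eq_of_lt (M : ℕ) (occ : Finset ℕ) {j y s : ℕ} (h : j + y ≤ s) :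
    pkFree M (occ ∪ Finset.Ico j (j+y)) s = pkFree M occ s := by
  unfold pkFree
  congr 1
  apply Finset.filter_congr
  intro x hx
  simp only [Finset.mem_Ico] at hx
  simp only [Finset.mem_union, not_or, Finset.mem_Ico, eq_iff_iff]
  constructor
  · exact fun h' => h'.1
  · exact fun h' => ⟨h', by omega⟩


lemma pk_sound (M : ℕ) : ∀ (cs ys : List ℕ) (occ : Finset ℕ) (js : List ℕ),
    parkAux M occ cs ys = some js → ∀ s,
    (((cs.zip ys).filter (fun p => s ≤ p.1)).map Prod.snd).sum ≤ pkFree M occ s := by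
  intro cs
  induction cs with
  | nil => intro ys occ js _ s; simp
  | cons c cs ih =>
    intro ys occ js hpark s
    cases ys with
    | nil => simp [parkAux] at hpark
    | cons y ys =>
      rw [parkAux] at hpark
      cases hfe : firstEmpty occ M c with
      | none => rw [hfe] at hpark; cases hpark
      | some j =>
        rw [hfe] at hpark
        dsimp only at hpark
        rw [pk_firstEmpty_iff] at hfe
        obtain ⟨hcj, hjM, hjocc, hpred⟩ := hfe
        by_cases hguard : (∀ i ∈ Finset.Ico j (j + y), i ∉ occ) ∧ j + y - 1 ≤ M
        · rw [if_pos hguard] at hpark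
          rcases Option.map_eq_some_iff.mp hpark with ⟨js', hjs', _⟩
          have hy1 : j + y ≤ M + 1 := by
            rcases Nat.eq_zero_or_pos y with rfl | hy
            · omega
            · omega
          have hrec := ih ys _ js' hjs' s
          rw [List.zip_cons_cons]
          by_cases hsc : s ≤ c
          · have hf : List.filter (fun p => decide (s ≤ p.1)) ((c,y) :: cs.zip ys)
                = (c,y) :: List.filter (fun p => decide (s ≤ p.1)) (cs.zip ys) := by
              rw [List.filter_cons]; simp [hsc]
            rw [hf, List.map_cons, List.sum_cons]
            have hsplit := pk_free_split M occ hguard.1 hy1 (le_trans hsc hcj)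
            omega
          · have hf : List.filter (fun p => decide (s ≤ p.1)) ((c,y) :: cs.zip ys)
                = List.filter (fun p => decide (s ≤ p.1)) (cs.zip ys) := by
              rw [List.filter_cons]; simp; omega
            rw [hf]
            calc _ ≤ pkFree M (occ ∪ Finset.Ico j (j + y)) s := hrec
            _ ≤ pkFree M occ s := pk_free_mono M Finset.subset_union_left s
        · rw [if_neg hguard] at hpark; cases hpark

lemma pk_complete (M : ℕ) : ∀ (cs : List ℕ) (occ : Finset ℕ),
    (∀ c ∈ cs, 1 ≤ c) →
    (∀ s, 1 ≤ s → pkCnt cs s ≤ pkFree M occ s) →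
    (parkAux M occ cs (List.replicate cs.length 1)).isSome = true := by
  intro cs
  induction cs with
  | nil => intro occ _ _; rw [List.length_nil, List.replicate_zero, parkAux]; rfl
  | cons c cs ih =>
    intro occ hpos hcond
    have hc1 : 1 ≤ c := hpos c (List.mem_cons_self)
    have hcntc : 1 ≤ pkCnt (c :: cs) c := by rw [pk_cnt_cons]; simp
    have hfreec : 1 ≤ pkFree M occ c := le_trans hcntc (hcond c hc1)
    have hex : ∃ x, x ∈ (Finset.Ico c (M+1)).filter (fun x => x ∉ occ) := by
      rcases Finset.card_pos.mp (by exact hfreec) with ⟨x, hx⟩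
      exact ⟨x, hx⟩
    rcases hex with ⟨x, hx⟩
    rw [Finset.mem_filter, Finset.mem_Ico] at hx
    rcases pk_firstEmpty_isSome occ M c x ⟨hx.1.1, by omega, hx.2⟩ with ⟨j, hj⟩
    have hj' := (pk_firstEmpty_iff occ M c j).mp hj
    obtain ⟨hcj, hjM, hjocc, hpred⟩ := hj'
    rw [List.length_cons, List.replicate_succ, parkAux, hj]
    dsimp only
    have hguard : (∀ i ∈ Finset.Ico j (j + 1), i ∉ occ) ∧ j + 1 - 1 ≤ M := by
      constructor
      · intro i hi
        rw [Finset.mem_Ico] at hi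
        have : i = j := by omega
        rwa [this]
      · omega
    rw [if_pos hguard]
    rw [Option.isSome_map]
    apply ih
    · intro c' hc'; exact hpos c' (List.mem_cons_of_mem _ hc')
    · intro s hs
      have hsplit : ∀ s', s' ≤ j → pkFree M occ s' = pkFree M (occ ∪ Finset.Ico j (j+1)) s' + 1 := by
        intro s' hs'
        exact pk_free_split M occ hguard.1 (by omega) hs'
      rcases le_or_gt s j with hsj | hsj
      · by_cases hsc : s ≤ c
        · have h1 := hcond s hs
          rw [pk_cnt_cons] at h1
          rw [if_pos hsc] at h1
          have := hsplit s hsj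
          omega
        · -- c < s ≤ j
          have h1 : pkCnt cs s ≤ pkCnt cs c := pk_cnt_mono cs (by omega)
          have h2 := hcond c hc1
          rw [pk_cnt_cons, if_pos (le_refl c)] at h2
          have h3 : pkFree M occ c = pkFree M occ s :=
            pk_free_eq_of_pred M occ (by omega) (fun i h1 h2 => hpred i h1 (by omega))
          have := hsplit s hsj
          omega
      · have h1 : pkFree M (occ ∪ Finset.Ico j (j+1)) s = pkFree M occ s :=
          pk_free_eq_of_lt M occ (by omega)
        have h2 := hcond s hs
        rw [pk_cnt_cons] at h2
        have h3 : pkCnt cs s ≤ pkCnt (c :: cs) s := by rw [pk_cnt_cons]; omega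
        rw [pk_cnt_cons] at h3
        omega




lemma pk_mem_lt_of_cnt_zero {l : List ℕ} {s : ℕ} (h : pkCnt l s = 0) : ∀ x ∈ l, x < s := by
  intro x hx
  by_contra hge
  have hmem : x ∈ l.filter (fun x => decide (s ≤ x)) := by
    rw [List.mem_filter]; exact ⟨hx, by simp; omega⟩
  have := List.length_pos_of_mem hmem
  unfold pkCnt at h; omega

lemma pk_zip_replicate (s : ℕ) : ∀ (l : List ℕ),
    (((l.zip (List.replicate l.length 1)).filter (fun p => s ≤ p.1)).map Prod.snd).sum
      = pkCnt l s := by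
  intro l
  induction l with
  | nil => simp [pkCnt]
  | cons c l ih =>
    rw [List.length_cons, List.replicate_succ, List.zip_cons_cons, pk_cnt_cons]
    by_cases hsc : s ≤ c
    · have hf : List.filter (fun p => decide (s ≤ p.1)) ((c,1) :: l.zip (List.replicate l.length 1))
          = (c,1) :: List.filter (fun p => decide (s ≤ p.1)) (l.zip (List.replicate l.length 1)) := by
        rw [List.filter_cons]; simp [hsc]
      rw [hf, List.map_cons, List.sum_cons, ih, if_pos hsc]
    · have hf : List.filter (fun p => decide (s ≤ p.1)) ((c,1) :: l.zip (List.replicate l.length 1))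
          = List.filter (fun p => decide (s ≤ p.1)) (l.zip (List.replicate l.length 1)) := by
        rw [List.filter_cons]; simp; omega
      rw [hf, ih, if_neg hsc]; omega

lemma pk_ys_sum (n a : ℕ) : (a :: List.replicate (n-1) 1).sum = a + (n-1) := by
  simp [List.sum_replicate]

lemma pk_ys_len (n a : ℕ) (hn : 1 ≤ n) : (a :: List.replicate (n-1) 1).length = n := by
  simp; omega

lemma pk_Q_to_PI (n a z : ℕ) (hn : 1 ≤ n) (ha : 1 < a) (hz : 0 < z) (cs : List ℕ)
    (hlen : cs.length = n) (hpos : ∀ c ∈ cs, 1 ≤ c)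
    (hQ : ∀ s ≤ n+z, pkCnt cs s + s ≤ n+z) :
    PermInvariant (a :: List.replicate (n-1) 1) cs z := by
  intro cs' hperm
  have hlen' : cs'.length = n := hperm.length_eq.trans hlen
  have hpos' : ∀ c ∈ cs', 1 ≤ c := fun c hc => hpos c (hperm.subset hc)
  refine ⟨by rw [hlen', pk_ys_len n a hn], hpos', ?_⟩
  have hallN : ∀ x ∈ cs, x < n + z := by
    apply pk_mem_lt_of_cnt_zero
    have := hQ (n+z) le_rfl
    omega
  cases cs' with
  | nil => exfalso; rw [List.length_nil] at hlen'; omega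
  | cons c₁ rest =>
    unfold parkResult
    rw [pk_ys_sum n a]
    set M := z - 1 + (a + (n - 1)) with hM
    have hc₁N : c₁ < n + z := hallN c₁ (hperm.subset (List.mem_cons_self))
    have hc₁1 : 1 ≤ c₁ := hpos' c₁ (List.mem_cons_self)
    set j := max c₁ z with hj
    have hfe : firstEmpty (Finset.Ico 1 z) M c₁ = some j := by
      rw [pk_firstEmpty_iff]
      refine ⟨le_max_left _ _, by omega, by simp [Finset.mem_Ico]; omega, ?_⟩
      intro i h1 h2
      simp only [Finset.mem_Ico]
      omega
    rw [parkAux, hfe]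
    dsimp only
    have hguard : (∀ i ∈ Finset.Ico j (j+a), i ∉ Finset.Ico 1 z) ∧ j + a - 1 ≤ M := by
      constructor
      · intro i hi
        simp only [Finset.mem_Ico] at hi ⊢
        omega
      · omega
    rw [if_pos hguard, Option.isSome_map]
    have hrest_len : rest.length = n - 1 := by
      rw [List.length_cons] at hlen'; omega
    rw [show List.replicate (n-1) 1 = List.replicate rest.length 1 by rw [hrest_len]]
    apply pk_complete
    · intro c hc; exact hpos' c (List.mem_cons_of_mem _ hc)
    · intro s hs
      have hfree : pkFree M (Finset.Ico 1 z ∪ Finset.Ico j (j+a)) s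
          = (j - max s z) + (M + 1 - max s (j+a)) := by
        unfold pkFree
        have hset : (Finset.Ico s (M+1)).filter (fun x => x ∉ Finset.Ico 1 z ∪ Finset.Ico j (j+a))
            = Finset.Ico (max s z) j ∪ Finset.Ico (max s (j+a)) (M+1) := by
          ext x
          simp only [Finset.mem_filter, Finset.mem_Ico, Finset.mem_union, not_or, not_and, not_lt]
          omega
        rw [hset, Finset.card_union_of_disjoint, Nat.card_Ico, Nat.card_Ico]
        rw [Finset.disjoint_left]
        intro x hx hx'
        simp only [Finset.mem_Ico] at hx hx'
        omega
      rw [hfree]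
      have hcc : ∀ t, pkCnt (c₁ :: rest) t = pkCnt cs t := fun t => pk_cnt_perm hperm t
      have hlen_rest : pkCnt rest s ≤ n - 1 := le_trans (pk_cnt_le_length _ _) (by omega)
      rcases le_or_gt s j with hsj | hsj
      · by_cases hsc : s ≤ c₁
        · have h1 := hQ s (by omega)
          have h2 := pk_cnt_cons c₁ rest s
          rw [if_pos hsc] at h2
          have h3 := hcc s
          omega
        · have h2 := pk_cnt_cons c₁ rest s
          rw [if_neg hsc] at h2
          omega
      · by_cases hsN : s ≤ n + z
        · by_cases hsja : s < j + a
          · have h1 : pkCnt rest s ≤ pkCnt rest (j+1) := pk_cnt_mono rest (by omega)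
            have h2 := pk_cnt_cons c₁ rest (j+1)
            have h3 := hQ (j+1) (by omega)
            have h4 := hcc (j+1)
            omega
          · have h1 := pk_cnt_cons c₁ rest s
            have h2 := hQ s hsN
            have h3 := hcc s
            omega
        · have : pkCnt rest s = 0 := by
            apply pk_cnt_eq_zero
            intro x hx
            have := hallN x (hperm.subset (List.mem_cons_of_mem _ hx))
            omega
          omega

lemma pk_PI_to_Q (n a z : ℕ) (hn : 1 ≤ n) (ha : 1 < a) (hz : 0 < z) (cs : List ℕ)
    (hPI : PermInvariant (a :: List.replicate (n-1) 1) cs z) :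
    cs.length = n ∧ (∀ c ∈ cs, 1 ≤ c) ∧ ∀ s ≤ n+z, pkCnt cs s + s ≤ n+z := by
  obtain ⟨hlen, hpos, _⟩ := hPI cs (List.Perm.refl cs)
  rw [pk_ys_len n a hn] at hlen
  refine ⟨hlen, hpos, ?_⟩
  intro s hsN
  by_contra hcon
  push_neg at hcon
  have hcnt1 : 1 ≤ pkCnt cs s := by omega
  rcases pk_cnt_pos hcnt1 with ⟨cstar, hcmem, hcge⟩
  have hperm : (cstar :: cs.erase cstar).Perm cs := (List.perm_cons_erase hcmem).symm
  obtain ⟨_, _, hsome⟩ := hPI _ hperm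
  unfold parkResult at hsome
  rcases Option.isSome_iff_exists.mp hsome with ⟨js, hjs⟩
  have hsnd := pk_sound _ (cstar :: cs.erase cstar) _ _ js hjs s
  rw [pk_ys_sum n a] at hsnd
  set M := z - 1 + (a + (n - 1)) with hM
  have herlen : (cs.erase cstar).length = n - 1 := by
    rw [List.length_erase_of_mem hcmem, hlen]
  have hzip : ((cstar :: cs.erase cstar).zip (a :: List.replicate (n-1) 1))
      = (cstar, a) :: ((cs.erase cstar).zip (List.replicate (cs.erase cstar).length 1)) := by
    rw [List.zip_cons_cons, herlen]
  rw [hzip] at hsnd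
  have hf : List.filter (fun p => decide (s ≤ p.1))
        ((cstar, a) :: ((cs.erase cstar).zip (List.replicate (cs.erase cstar).length 1)))
      = (cstar, a) :: List.filter (fun p => decide (s ≤ p.1))
        ((cs.erase cstar).zip (List.replicate (cs.erase cstar).length 1)) := by
    rw [List.filter_cons]; simp [hcge]
  rw [hf, List.map_cons, List.sum_cons, pk_zip_replicate] at hsnd
  have hfr := pk_free_le M (Finset.Ico 1 z) s
  have hcntE : pkCnt (cstar :: cs.erase cstar) s = pkCnt cs s := pk_cnt_perm hperm s
  rw [pk_cnt_cons, if_pos hcge] at hcntE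
  omega



lemma pk_cnt_compl (l : List ℕ) (s : ℕ) :
    pkCnt l s + (l.filter (fun x => decide (x < s))).length = l.length := by
  have h := List.length_eq_length_filter_add (l := l) (fun x => decide (s ≤ x))
  have h2 : l.filter (fun x => !decide (s ≤ x)) = l.filter (fun x => decide (x < s)) := by
    apply List.filter_congr
    intro x _
    by_cases hx : x < s
    · simp [hx, show ¬ s ≤ x from by omega]
    · simp [hx, show s ≤ x from by omega]
  rw [h2] at h
  unfold pkCnt
  omega

lemma pk_sorted_filter_lt (s : ℕ) : ∀ (l : List ℕ), l.Pairwise (· ≤ ·) → ∀ i, i < l.length →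
    (i + 1 ≤ (l.filter (fun x => decide (x < s))).length ↔ l.getD i 0 < s) := by
  intro l
  induction l with
  | nil => intro _ i hi; simp at hi
  | cons a l ih =>
    intro hsort i hi
    rw [List.pairwise_cons] at hsort
    obtain ⟨hall, hsl⟩ := hsort
    by_cases has : a < s
    · have hf : (a :: l).filter (fun x => decide (x < s))
          = a :: l.filter (fun x => decide (x < s)) := by
        rw [List.filter_cons]; simp [has]
      rw [hf, List.length_cons]
      cases i with
      | zero => simp [has]
      | succ i =>
        rw [List.getD_cons_succ]
        rw [List.length_cons] at hi
        rw [← ih hsl i (by omega)]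
        omega
    · have hf : (a :: l).filter (fun x => decide (x < s)) = [] := by
        rw [List.filter_eq_nil_iff]
        intro x hx
        simp only [decide_eq_true_eq, not_lt]
        rcases List.mem_cons.mp hx with rfl | hx'
        · omega
        · have := hall x hx'; omega
      rw [hf]
      simp only [List.length_nil]
      constructor
      · intro h; omega
      · intro h
        exfalso
        cases i with
        | zero => rw [List.getD_cons_zero] at h; omega
        | succ i =>
          rw [List.getD_cons_succ] at h
          rw [List.length_cons] at hi
          have hmem : l.getD i 0 ∈ l := by
            rw [List.getD_eq_getElem _ _ (by omega)]
            exact List.getElem_mem _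
          have := hall _ hmem
          omega

lemma pk_bridge (n z : ℕ) (hn : 1 ≤ n) (hz : 0 < z) (cs : List ℕ) :
    IsUPF ((List.range n).map (fun i => z + i)) cs ↔
    (cs.length = n ∧ (∀ c ∈ cs, 1 ≤ c) ∧ ∀ s ≤ n+z, pkCnt cs s + s ≤ n+z) := by
  have hulen : ((List.range n).map (fun i => z + i)).length = n := by simp
  have hugetD : ∀ i, i < n → ((List.range n).map (fun i => z + i)).getD i 0 = z + i := by
    intro i hi
    rw [List.getD_eq_getElem _ _ (by simpa using hi)]
    simp
  unfold IsUPF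
  rw [hulen]
  set l := orderStats cs with hl
  have hsort : l.Pairwise (· ≤ ·) := Multiset.pairwise_sort _ _
  have hperm : l.Perm cs := by
    rw [hl]; unfold orderStats
    exact Multiset.coe_eq_coe.mp (by rw [Multiset.sort_eq])
  have hlen_l : l.length = cs.length := hperm.length_eq
  have hcnt : ∀ s, pkCnt l s = pkCnt cs s := fun s => pk_cnt_perm hperm s
  constructor
  · rintro ⟨h1, h2, h3⟩
    refine ⟨h1, h2, ?_⟩
    intro s hs
    have hcl : pkCnt cs s ≤ n := by rw [← h1]; exact pk_cnt_le_length cs s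
    by_cases hsz : s ≤ z
    · omega
    · have hi : s - z - 1 < n := by omega
      have h4 := h3 (s - z - 1) hi
      rw [hugetD _ hi] at h4
      have h5 : l.getD (s-z-1) 0 < s := by omega
      have h6 := (pk_sorted_filter_lt s l hsort (s-z-1) (by omega)).mpr h5
      have h7 := pk_cnt_compl l s
      rw [hcnt] at h7
      omega
  · rintro ⟨h1, h2, h3⟩
    refine ⟨h1, h2, ?_⟩
    intro i hi
    rw [hugetD _ hi]
    have h4 := h3 (z + i + 1) (by omega)
    have h7 := pk_cnt_compl l (z+i+1)
    rw [hcnt] at h7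
    have h6 : i + 1 ≤ (l.filter (fun x => decide (x < z+i+1))).length := by omega
    have := (pk_sorted_filter_lt (z+i+1) l hsort i (by omega)).mp h6
    omega

lemma pk_set_eq (n a z : ℕ) (hn : 1 ≤ n) (ha : 1 < a) (hz : 0 < z) :
    {cs : List ℕ | PermInvariant (a :: List.replicate (n-1) 1) cs z}
      = {cs : List ℕ | IsUPF ((List.range n).map (fun i => z + i)) cs} := by
  ext cs
  simp only [Set.mem_setOf_eq]
  rw [pk_bridge n z hn hz]
  constructor
  · exact pk_PI_to_Q n a z hn ha hz cs
  · rintro ⟨h1, h2, h3⟩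
    exact pk_Q_to_PI n a z hn ha hz cs h1 h2 h3

def pkD {N n : ℕ} (g : Fin n → ZMod N) (i : ℕ) : ℕ :=
  (Finset.univ.filter fun t => g t = (i : ZMod N)).card

def pkF {N n : ℕ} (g : Fin n → ZMod N) (m : ℕ) : ℕ := ∑ i ∈ Finset.range m, pkD g i

def pkT {N n : ℕ} (g : Fin n → ZMod N) (x : ℕ) : ℤ := (pkF g x : ℤ) - x

def pkLM {N n : ℕ} (g : Fin n → ZMod N) (q : ℕ) : Prop := ∀ y < q, pkT g y > pkT g q

instance {N n : ℕ} (g : Fin n → ZMod N) : DecidablePred (pkLM g) := fun _ => by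
  unfold pkLM; exact inferInstance

def pkP (z : ℕ) {N n : ℕ} (g : Fin n → ZMod N) : Prop :=
  ∀ m < N, m + 1 ≤ (Finset.univ.filter fun t => (g t).val < m).card + z

instance pkP_dec (z : ℕ) {N n : ℕ} : DecidablePred (pkP z (N := N) (n := n)) := fun _ => by
  unfold pkP; exact inferInstance

lemma pkD_per {N n : ℕ} (g : Fin n → ZMod N) (i : ℕ) : pkD g (i + N) = pkD g i := by
  unfold pkD
  congr 1
  ext t
  have : ((i + N : ℕ) : ZMod N) = (i : ZMod N) := by push_cast [ZMod.natCast_self]; ring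
  rw [this]

lemma pkF_N {N n : ℕ} [NeZero N] (g : Fin n → ZMod N) : pkF g N = n := by
  have h1 : (Finset.univ : Finset (Fin n)).card
      = ∑ i ∈ Finset.range N, (Finset.univ.filter fun t => (g t).val = i).card :=
    Finset.card_eq_sum_card_fiberwise (fun t _ => Finset.mem_coe.mpr (Finset.mem_range.mpr (ZMod.val_lt _)))
  rw [Finset.card_univ, Fintype.card_fin] at h1
  unfold pkF pkD
  refine Eq.trans ?_ h1.symm
  apply Finset.sum_congr rfl
  intro i hi
  rw [Finset.mem_range] at hi
  congr 1
  ext t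
  simp only [Finset.mem_filter, Finset.mem_univ, true_and]
  constructor
  · intro h; rw [h, ZMod.val_natCast_of_lt hi]
  · intro h; rw [← h]; exact (ZMod.natCast_rightInverse (g t)).symm

lemma pkF_per {N n : ℕ} [NeZero N] (g : Fin n → ZMod N) : ∀ m, pkF g (m + N) = pkF g m + n := by
  intro m
  induction m with
  | zero => rw [Nat.zero_add, pkF_N]; simp [pkF]
  | succ m ih =>
    have h1 : m + 1 + N = (m + N) + 1 := by omega
    rw [h1]
    unfold pkF
    rw [Finset.sum_range_succ, Finset.sum_range_succ]
    unfold pkF at ih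
    rw [ih, pkD_per]
    omega

lemma pkT_step {N n : ℕ} (g : Fin n → ZMod N) (x : ℕ) : pkT g x ≤ pkT g (x+1) + 1 := by
  unfold pkT pkF
  rw [Finset.sum_range_succ]
  push_cast
  omega

lemma pkT_per (n z : ℕ) (hz : 0 < z) (g : Fin n → ZMod (n+z)) (x : ℕ) :
    pkT g (x + (n+z)) = pkT g x - z := by
  haveI : NeZero (n+z) := ⟨by omega⟩
  unfold pkT
  rw [pkF_per]
  push_cast
  ring

lemma pk_claimA (n z : ℕ) (hz : 0 < z) (g : Fin n → ZMod (n+z)) (k : ZMod (n+z))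
    (m : ℕ) (hm : m < n+z) :
    (Finset.univ.filter fun t => (g t + k).val < m).card + pkF g ((n+z) - k.val)
      = pkF g ((n+z) - k.val + m) := by
  haveI : NeZero (n+z) := ⟨by omega⟩
  have hkv : k.val < n + z := ZMod.val_lt k
  set p := n + z - k.val with hp
  have hmap : ∀ t ∈ (Finset.univ.filter fun t => (g t + k).val < m),
      (g t + k).val + p ∈ Finset.Ico p (p + m) := by
    intro t ht
    rw [Finset.mem_filter] at ht
    rw [Finset.mem_Ico]
    omega
  rw [Finset.card_eq_sum_card_fiberwise hmap]
  have hfib : ∀ i ∈ Finset.Ico p (p + m),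
      ((Finset.univ.filter fun t => (g t + k).val < m).filter fun t => (g t + k).val + p = i)
        = (Finset.univ.filter fun t => g t = (i : ZMod (n+z))) := by
    intro i hi
    rw [Finset.mem_Ico] at hi
    ext t
    simp only [Finset.mem_filter, Finset.mem_univ, true_and]
    constructor
    · rintro ⟨hlt, heq⟩
      have hval : (g t + k).val = i - p := by omega
      have h1 : g t + k = ((i - p : ℕ) : ZMod (n+z)) := by
        apply ZMod.val_injective
        rw [hval, ZMod.val_natCast_of_lt (by omega)]
      have h2 : g t = ((i - p : ℕ) : ZMod (n+z)) - k := by rw [← h1]; ring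
      rw [h2]
      have h3 : k = ((k.val : ℕ) : ZMod (n+z)) := (ZMod.natCast_rightInverse k).symm
      rw [h3]
      have h5 : ((i + k.val : ℕ) : ZMod (n+z)) = ((i - p : ℕ) : ZMod (n+z)) := by
        have h6 : i + k.val = (i - p) + (n+z) := by omega
        rw [h6, Nat.cast_add, ZMod.natCast_self, add_zero]
      have h7 : ((i : ℕ) : ZMod (n+z)) = ((i + k.val : ℕ) : ZMod (n+z)) - ((k.val : ℕ) : ZMod (n+z)) := by
        push_cast; ring
      rw [h7, h5]
    · intro hgt
      have h3 : k = ((k.val : ℕ) : ZMod (n+z)) := (ZMod.natCast_rightInverse k).symm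
      have hval : (g t + k).val = i - p := by
        rw [hgt, h3, ← Nat.cast_add, ZMod.val_natCast]
        rw [Nat.mod_eq_sub_mod (by omega), Nat.mod_eq_of_lt (by omega)]
        omega
      omega
  have hsum2 : ∑ b ∈ Finset.Ico p (p+m),
      ((Finset.univ.filter fun t => (g t + k).val < m).filter fun t => (g t + k).val + p = b).card
      = ∑ b ∈ Finset.Ico p (p+m), pkD g b :=
    Finset.sum_congr rfl (fun i hi => by rw [hfib i hi]; rfl)
  rw [hsum2]
  have hsum := Finset.sum_Ico_consecutive (fun i => pkD g i) (Nat.zero_le p) (Nat.le_add_right p m)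
  unfold pkF
  simp only [Finset.range_eq_Ico]
  rw [add_comm]
  exact hsum

lemma pk_goodIff (n z : ℕ) (hz : 0 < z) (g : Fin n → ZMod (n+z)) (k : ZMod (n+z)) :
    pkP z (fun t => g t + k) ↔ pkLM g (2*(n+z) - k.val) := by
  haveI : NeZero (n+z) := ⟨by omega⟩
  have hkv : k.val < n + z := ZMod.val_lt k
  set p := n + z - k.val with hp
  have h2N : 2*(n+z) - k.val = p + (n+z) := by omega
  rw [h2N]
  have hTpN : pkT g (p + (n+z)) = pkT g p - z := pkT_per n z hz g p
  have hwin_iff : ∀ m, m < (n+z) →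
      ((m + 1 ≤ (Finset.univ.filter fun t => (g t + k).val < m).card + z) ↔
        pkT g (p + m) > pkT g (p + (n+z))) := by
    intro m hm
    have hA := pk_claimA n z hz g k m hm
    rw [hTpN]
    unfold pkT
    rw [show (n+z) - k.val = p from rfl] at hA
    constructor
    · intro h
      have : (pkF g (p+m) : ℤ) = (Finset.univ.filter fun t => (g t + k).val < m).card + pkF g p := by
        rw [← hA]; push_cast; ring
      rw [this]
      push_cast
      omega
    · intro h
      have h9 : (pkF g (p+m) : ℤ) = (Finset.univ.filter fun t => (g t + k).val < m).card + pkF g p := by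
        rw [← hA]; push_cast; ring
      rw [h9] at h
      push_cast at h ⊢
      omega
  constructor
  · intro hP
    have hwin : ∀ m, m < (n+z) → pkT g (p + m) > pkT g (p + (n+z)) :=
      fun m hm => (hwin_iff m hm).mp (hP m hm)
    intro y hy
    rcases le_or_gt p y with hyp | hyp
    · have := hwin (y - p) (by omega)
      rw [show p + (y - p) = y from by omega] at this
      exact this
    · have h1 := hwin (y + (n+z) - p) (by omega)
      rw [show p + (y + (n+z) - p) = y + (n+z) from by omega] at h1
      have h2 : pkT g (y + (n+z)) = pkT g y - z := pkT_per n z hz g y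
      omega
  · intro hLM m hm
    exact (hwin_iff m hm).mpr (hLM (p + m) (by omega))

lemma pk_LM_count (n z : ℕ) (hn : 1 ≤ n) (hz : 0 < z) (g : Fin n → ZMod (n+z)) :
    ((Finset.Icc ((n+z)+1) (2*(n+z))).filter (pkLM g)).card = z := by
  haveI : NeZero (n+z) := ⟨by omega⟩
  have hT0 : pkT g 0 = 0 := by simp [pkT, pkF]
  have hTN : pkT g (n+z) = (n : ℤ) - (n+z) := by
    unfold pkT; rw [pkF_N]; push_cast; ring
  obtain ⟨μ₁, hμ₁le, x₁, hx₁, hx₁2⟩ :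
      ∃ μ, (∀ x, x ≤ n+z → μ ≤ pkT g x) ∧ ∃ x, x ≤ n+z ∧ pkT g x = μ := by
    have hne1 : ((Finset.Icc 0 (n+z)).image (pkT g)).Nonempty :=
      ⟨pkT g 0, Finset.mem_image_of_mem _ (by simp)⟩
    refine ⟨((Finset.Icc 0 (n+z)).image (pkT g)).min' hne1, ?_, ?_⟩
    · intro x hx
      exact Finset.min'_le _ _ (Finset.mem_image_of_mem _ (by simp [hx]))
    · have := Finset.min'_mem _ hne1
      rw [Finset.mem_image] at this
      rcases this with ⟨x, hx, hx2⟩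
      exact ⟨x, by simpa using hx, hx2⟩
  obtain ⟨μ₂, hμ₂le, x₂, hx₂, hx₂2⟩ :
      ∃ μ, (∀ x, x ≤ 2*(n+z) → μ ≤ pkT g x) ∧ ∃ x, x ≤ 2*(n+z) ∧ pkT g x = μ := by
    have hne2 : ((Finset.Icc 0 (2*(n+z))).image (pkT g)).Nonempty :=
      ⟨pkT g 0, Finset.mem_image_of_mem _ (by simp)⟩
    refine ⟨((Finset.Icc 0 (2*(n+z))).image (pkT g)).min' hne2, ?_, ?_⟩
    · intro x hx
      exact Finset.min'_le _ _ (Finset.mem_image_of_mem _ (by simp [hx]))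
    · have := Finset.min'_mem _ hne2
      rw [Finset.mem_image] at this
      rcases this with ⟨x, hx, hx2⟩
      exact ⟨x, by simpa using hx, hx2⟩
  have hμdiff : μ₂ = μ₁ - z := by
    have h1 : μ₂ ≤ μ₁ - z := by
      have h2 := hμ₂le (x₁ + (n+z)) (by omega)
      rw [pkT_per n z hz g x₁, hx₁2] at h2
      omega
    have h2 : μ₁ - z ≤ μ₂ := by
      rcases le_or_gt x₂ (n+z) with hc | hc
      · have := hμ₁le x₂ hc
        omega
      · have hper := pkT_per n z hz g (x₂ - (n+z))
        rw [show x₂ - (n+z) + (n+z) = x₂ from by omega] at hper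
        have := hμ₁le (x₂ - (n+z)) (by omega)
        omega
    omega
  have hcard : ((Finset.Icc ((n+z)+1) (2*(n+z))).filter (pkLM g)).card
      = (Finset.Ico μ₂ μ₁).card := by
    apply Finset.card_bij (fun q _ => pkT g q)
    · intro q hq
      rw [Finset.mem_filter, Finset.mem_Icc] at hq
      obtain ⟨⟨hq1, hq2⟩, hq3⟩ := hq
      rw [Finset.mem_Ico]
      refine ⟨hμ₂le q hq2, ?_⟩
      have := hq3 x₁ (by omega)
      omega
    · intro q hq q' hq' heq
      rw [Finset.mem_filter, Finset.mem_Icc] at hq hq'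
      by_contra hne
      rcases lt_or_gt_of_ne hne with h | h
      · have := hq'.2 q h; omega
      · have := hq.2 q' h; omega
    · intro v hv
      rw [Finset.mem_Ico] at hv
      have hSne : ((Finset.Icc 0 (2*(n+z))).filter (fun x => pkT g x ≤ v)).Nonempty :=
        ⟨x₂, by rw [Finset.mem_filter, Finset.mem_Icc]; exact ⟨⟨Nat.zero_le _, hx₂⟩, by omega⟩⟩
      obtain ⟨q, hqmem, hqmin'⟩ :
          ∃ q, (q ∈ (Finset.Icc 0 (2*(n+z))).filter (fun x => pkT g x ≤ v)) ∧
            ∀ x ∈ (Finset.Icc 0 (2*(n+z))).filter (fun x => pkT g x ≤ v), q ≤ x :=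
        ⟨_, Finset.min'_mem _ hSne, fun x hx => Finset.min'_le _ _ hx⟩
      rw [Finset.mem_filter, Finset.mem_Icc] at hqmem
      obtain ⟨⟨_, hq2N⟩, hqv⟩ := hqmem
      have hqmin : ∀ x, x ≤ 2*(n+z) → pkT g x ≤ v → q ≤ x := by
        intro x hx1 hx2
        exact hqmin' x (by rw [Finset.mem_filter, Finset.mem_Icc]; exact ⟨⟨Nat.zero_le _, hx1⟩, hx2⟩)
      have hqgtN : (n+z) < q := by
        by_contra hc
        push_neg at hc
        have := hμ₁le q hc
        omega
      have hTq : pkT g q = v := by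
        have hnotin : ¬ (pkT g (q-1) ≤ v) := by
          intro hc
          have := hqmin (q-1) (by omega) hc
          omega
        have hstep := pkT_step g (q-1)
        rw [show q - 1 + 1 = q from by omega] at hstep
        omega
      have hLMq : pkLM g q := by
        intro y hy
        have hny : ¬ (pkT g y ≤ v) := by
          intro hc
          have := hqmin y (by omega) hc
          omega
        omega
      refine ⟨q, ?_, hTq⟩
      rw [Finset.mem_filter, Finset.mem_Icc]
      exact ⟨⟨by omega, hq2N⟩, hLMq⟩
  rw [hcard, Int.card_Ico, hμdiff]
  rw [show μ₁ - (μ₁ - (z:ℤ)) = z from by ring]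
  simp

lemma pk_rot_count (n z : ℕ) [NeZero (n+z)] (hn : 1 ≤ n) (hz : 0 < z) (g : Fin n → ZMod (n+z)) :
    (Finset.univ.filter fun k : ZMod (n+z) => pkP z (fun t => g t + k)).card = z := by
  refine Eq.trans ?_ (pk_LM_count n z hn hz g)
  apply Finset.card_bij (fun k _ => 2*(n+z) - k.val)
  · intro k hk
    rw [Finset.mem_filter] at hk
    have hkv : k.val < n+z := ZMod.val_lt k
    rw [Finset.mem_filter, Finset.mem_Icc]
    exact ⟨⟨by omega, by omega⟩, (pk_goodIff n z hz g k).mp hk.2⟩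
  · intro k hk k' hk' heq
    have h1 : k.val < n+z := ZMod.val_lt k
    have h2 : k'.val < n+z := ZMod.val_lt k'
    have h3 : k.val = k'.val := by omega
    exact ZMod.val_injective _ h3
  · intro q hq
    rw [Finset.mem_filter, Finset.mem_Icc] at hq
    obtain ⟨⟨hq1, hq2⟩, hq3⟩ := hq
    refine ⟨((2*(n+z) - q : ℕ) : ZMod (n+z)), ?_, ?_⟩
    · rw [Finset.mem_filter]
      refine ⟨Finset.mem_univ _, ?_⟩
      rw [pk_goodIff n z hz g _, ZMod.val_natCast_of_lt (by omega),
        show 2*(n+z) - (2*(n+z) - q) = q from by omega]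
      exact hq3
    · rw [ZMod.val_natCast_of_lt (by omega)]
      omega

lemma pk_P_count (n z : ℕ) [NeZero (n+z)] (hn : 1 ≤ n) (hz : 0 < z) :
    (Finset.univ.filter fun g : Fin n → ZMod (n+z) => pkP z g).card = z * (n+z)^(n-1) := by
  have h1 : ∀ k : ZMod (n+z),
      (Finset.univ.filter fun g : Fin n → ZMod (n+z) => pkP z (fun t => g t + k)).card
        = (Finset.univ.filter fun g : Fin n → ZMod (n+z) => pkP z g).card := by
    intro k
    apply Finset.card_bij (fun g _ => fun t => g t + k)
    · intro g hg
      rw [Finset.mem_filter] at hg ⊢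
      exact ⟨Finset.mem_univ _, hg.2⟩
    · intro g hg g' hg' heq
      funext t
      exact add_right_cancel (congrFun heq t)
    · intro g hg
      rw [Finset.mem_filter] at hg
      refine ⟨fun t => g t - k, ?_, ?_⟩
      · rw [Finset.mem_filter]
        refine ⟨Finset.mem_univ _, ?_⟩
        simpa [sub_add_cancel] using hg.2
      · funext t
        simp [sub_add_cancel]
  have key : (Finset.univ.filter fun g : Fin n → ZMod (n+z) => pkP z g).card * (n+z)
      = z * (n+z)^n := by
    calc (Finset.univ.filter fun g : Fin n → ZMod (n+z) => pkP z g).card * (n+z)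
        = ∑ _k : ZMod (n+z), (Finset.univ.filter fun g : Fin n → ZMod (n+z) => pkP z g).card := by
          rw [Finset.sum_const, Finset.card_univ, ZMod.card, smul_eq_mul, mul_comm]
      _ = ∑ k : ZMod (n+z),
            (Finset.univ.filter fun g : Fin n → ZMod (n+z) => pkP z (fun t => g t + k)).card :=
          Finset.sum_congr rfl (fun k _ => (h1 k).symm)
      _ = ∑ g : Fin n → ZMod (n+z),
            (Finset.univ.filter fun k : ZMod (n+z) => pkP z (fun t => g t + k)).card := by
          simp_rw [Finset.card_filter]
          rw [Finset.sum_comm]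
      _ = ∑ _g : Fin n → ZMod (n+z), z :=
          Finset.sum_congr rfl (fun g _ => pk_rot_count n z hn hz g)
      _ = z * (n+z)^n := by
          rw [Finset.sum_const, Finset.card_univ, smul_eq_mul, Fintype.card_fun, ZMod.card,
            Fintype.card_fin, mul_comm]
  have hpow : (n+z)^n = (n+z)^(n-1) * (n+z) := by
    rw [← pow_succ]
    congr 1
    omega
  apply Nat.eq_of_mul_eq_mul_right (show 0 < n + z by omega)
  rw [hpow, ← mul_assoc] at key
  exact key

lemma pk_card_filter_ofFn : ∀ (m : ℕ) (p : ℕ → Prop) [DecidablePred p] (f : Fin m → ℕ),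
    (Finset.univ.filter fun t => p (f t)).card
      = ((List.ofFn f).filter (fun x => decide (p x))).length := by
  intro m
  induction m with
  | zero => intro p _ f; simp
  | succ m ih =>
    intro p _ f
    rw [Finset.card_filter, Fin.sum_univ_succ, ← Finset.card_filter, ih p (fun t => f t.succ),
      List.ofFn_succ, List.filter_cons]
    by_cases h : p (f 0)
    · simp [h]
      omega
    · simp [h]

lemma pk_Q_iff_P (n z : ℕ) [NeZero (n+z)] (hn : 1 ≤ n) (hz : 0 < z) (cs : List ℕ) :
    (cs.length = n ∧ (∀ c ∈ cs, 1 ≤ c) ∧ ∀ s ≤ n+z, pkCnt cs s + s ≤ n+z)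
    ↔ ∃ g : Fin n → ZMod (n+z), pkP z g ∧ cs = List.ofFn (fun t => (g t).val + 1) := by
  constructor
  · rintro ⟨hlen, hpos, hQ⟩
    have hallN : ∀ x ∈ cs, x < n+z := by
      apply pk_mem_lt_of_cnt_zero
      have := hQ (n+z) le_rfl
      omega
    set f : Fin n → ℕ := fun t => cs.getD t 0 with hf
    have hcs_eq : cs = List.ofFn f := by
      apply List.ext_getElem (by simp [hlen])
      intro i h1 h2
      rw [List.getElem_ofFn]
      exact (List.getD_eq_getElem cs 0 h1).symm
    have hmem : ∀ t : Fin n, f t ∈ cs := by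
      intro t
      have ht : (t : ℕ) < cs.length := by rw [hlen]; exact t.isLt
      rw [hf]
      simp only
      rw [List.getD_eq_getElem cs 0 ht]
      exact List.getElem_mem _
    have hfpos : ∀ t, 1 ≤ f t := fun t => hpos _ (hmem t)
    have hfN : ∀ t, f t < n + z := fun t => hallN _ (hmem t)
    refine ⟨fun t => ((f t - 1 : ℕ) : ZMod (n+z)), ?_, ?_⟩
    · intro m hm
      have hval : ∀ t : Fin n, (((f t - 1 : ℕ) : ZMod (n+z))).val = f t - 1 :=
        fun t => ZMod.val_natCast_of_lt (by have := hfN t; omega)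
      have hcard : (Finset.univ.filter fun t => (((f t - 1 : ℕ) : ZMod (n+z))).val < m).card
          = (Finset.univ.filter fun t => f t - 1 < m).card := by
        congr 1
        ext t
        simp only [Finset.mem_filter, Finset.mem_univ, true_and]
        rw [hval t]
      rw [hcard]
      have hsplit := Finset.card_filter_add_card_filter_not
        (s := Finset.univ) (p := fun t : Fin n => f t - 1 < m)
      rw [Finset.card_univ, Fintype.card_fin] at hsplit
      have hcnt : (Finset.univ.filter fun t => ¬ (f t - 1 < m)).card = pkCnt cs (m+1) := by
        have h9 := pk_card_filter_ofFn n (fun x => ¬ (x - 1 < m)) f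
        rw [← hcs_eq] at h9
        rw [h9]
        unfold pkCnt
        congr 1
        apply List.filter_congr
        intro x hx
        have h1 : 1 ≤ x := hpos x hx
        simp only [decide_eq_decide]
        omega
      have hQm := hQ (m+1) (by omega)
      omega
    · rw [hcs_eq]
      apply List.ext_getElem (by simp)
      intro i h1 h2
      rw [List.getElem_ofFn, List.getElem_ofFn]
      have hl1 := hfpos ⟨i, by simpa using h1⟩
      have hl2 := hfN ⟨i, by simpa using h1⟩
      rw [ZMod.val_natCast_of_lt (by omega)]
      omega
  · rintro ⟨g, hP, rfl⟩
    refine ⟨by simp, ?_, ?_⟩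
    · intro x hx
      rw [List.mem_ofFn] at hx
      rcases hx with ⟨t, rfl⟩
      exact Nat.le_add_left _ _
    · intro s hs
      rcases Nat.eq_zero_or_pos s with rfl | hs1
      · have := pk_cnt_le_length (List.ofFn fun t => (g t).val + 1) 0
        simp only [List.length_ofFn] at this
        omega
      · have h1 := pk_card_filter_ofFn n (fun x => s ≤ x) (fun t => (g t).val + 1)
        have h2 : pkCnt (List.ofFn fun t => (g t).val + 1) s
            = (Finset.univ.filter fun t => s ≤ (g t).val + 1).card := by
          unfold pkCnt
          exact h1.symm
        have h3 := Finset.card_filter_add_card_filter_not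
          (s := Finset.univ) (p := fun t : Fin n => s ≤ (g t).val + 1)
        rw [Finset.card_univ, Fintype.card_fin] at h3
        have h4 : (Finset.univ.filter fun t => ¬ (s ≤ (g t).val + 1)).card
            = (Finset.univ.filter fun t => (g t).val < s - 1).card := by
          congr 1
          ext t
          simp only [Finset.mem_filter, Finset.mem_univ, true_and, not_le]
          omega
        have h5 := hP (s-1) (by omega)
        omega

lemma pk_listOf_inj (n z : ℕ) [NeZero (n+z)] :
    Function.Injective (fun g : Fin n → ZMod (n+z) => List.ofFn (fun t => (g t).val + 1)) := by
  intro g g' h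
  simp only [List.ofFn_inj] at h
  funext t
  have := congrFun h t
  exact ZMod.val_injective _ (by omega)

lemma pk_UPF_finset (n z : ℕ) [NeZero (n+z)] (hn : 1 ≤ n) (hz : 0 < z) :
    {cs : List ℕ | IsUPF ((List.range n).map (fun i => z + i)) cs}
      = ↑((Finset.univ.filter fun g : Fin n → ZMod (n+z) => pkP z g).image
          (fun g => List.ofFn (fun t => (g t).val + 1))) := by
  ext cs
  rw [Set.mem_setOf_eq, Finset.coe_image, Set.mem_image]
  rw [pk_bridge n z hn hz, pk_Q_iff_P n z hn hz]
  constructor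
  · rintro ⟨g, hg, rfl⟩
    exact ⟨g, by simp [Finset.mem_coe, Finset.mem_filter, hg], rfl⟩
  · rintro ⟨g, hg, rfl⟩
    rw [Finset.mem_coe, Finset.mem_filter] at hg
    exact ⟨g, hg.2, rfl⟩

theorem stmt15 (n a z : ℕ) (hn : 1 ≤ n) (ha : 1 < a) (hz : 0 < z) :
    {cs : List ℕ | PermInvariant (a :: List.replicate (n - 1) 1) cs z} =
      {cs : List ℕ | IsUPF ((List.range n).map (fun i => z + i)) cs} ∧
    {cs : List ℕ | PermInvariant (a :: List.replicate (n - 1) 1) cs z}.ncard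
      = z * (n + z) ^ (n - 1) := by
  haveI : NeZero (n+z) := ⟨by omega⟩
  refine ⟨pk_set_eq n a z hn ha hz, ?_⟩
  rw [pk_set_eq n a z hn ha hz, pk_UPF_finset n z hn hz, Set.ncard_coe_finset,
    Finset.card_image_of_injective _ (pk_listOf_inj n z), pk_P_count n z hn hz]
end

section
/- Let c = (c_1,...,c_n) be a parking sequence for (y;z). Then c parks y in the standard order (final configuration is trailer, C_1, C_2, ..., C_n with no gaps) if and only if c_k ≤ z + y_1 + ... + y_{k-1} for all k ∈ [n]. -/
open Finset

lemma firstEmpty_ge {occ : Finset ℕ} {M c j : ℕ}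
    (h : firstEmpty occ M c = some j) : c ≤ j := by
  have hmem := List.mem_of_find?_eq_some h
  exact (List.mem_range'_1.mp hmem).1

lemma firstEmpty_Ico {z M : ℕ} (hzM : z ≤ M) :
    ∀ d c, 1 ≤ c → c + d = z → firstEmpty (Finset.Ico 1 z) M c = some z := by
  intro d
  induction d with
  | zero =>
    intro c h1 hc
    have hcz : c = z := by omega
    subst hcz
    unfold firstEmpty
    have hn : M + 1 - c = (M - c) + 1 := by omega
    rw [hn, List.range'_succ, List.find?_cons_of_pos]
    simp [Finset.mem_Ico]
  | succ n ih =>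
    intro c h1 hc
    unfold firstEmpty
    have hn : M + 1 - c = (M - c) + 1 := by omega
    rw [hn, List.range'_succ, List.find?_cons_of_neg]
    · have := ih (c+1) (by omega) (by omega)
      unfold firstEmpty at this
      have h2 : M - c = M + 1 - (c+1) := by omega
      rw [h2]; exact this
    · simp [Finset.mem_Ico]; omega

lemma park_main : ∀ (ys cs : List ℕ) (z : ℕ), 0 < z → (∀ y ∈ ys, 0 < y) →
    (∀ c ∈ cs, 1 ≤ c) → cs.length = ys.length →
    (parkAux (z - 1 + ys.sum) (Finset.Ico 1 z) cs ys = some (standardStarts z ys) ↔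
      ∀ k < ys.length, cs.getD k 0 ≤ z + (ys.take k).sum) := by
  intro ys
  induction ys with
  | nil =>
    intro cs z hz hy hc hlen
    have hcs : cs = [] := List.length_eq_zero_iff.mp hlen
    subst hcs
    simp [parkAux, standardStarts]
  | cons y ys ih =>
    intro cs z hz hy hc hlen
    obtain ⟨c, cs, rfl⟩ : ∃ c cs', cs = c :: cs' := by
      cases cs with
      | nil => simp at hlen
      | cons a l => exact ⟨a, l, rfl⟩
    set M := z - 1 + (y :: ys).sum with hM
    have hyz : 0 < y := hy y (by simp)
    have hc1 : 1 ≤ c := hc c (by simp)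
    have hzM : z ≤ M := by simp [hM]; omega
    by_cases hcz : c ≤ z
    · -- firstEmpty gives z
      have hfe : firstEmpty (Finset.Ico 1 z) M c = some z :=
        firstEmpty_Ico hzM (z - c) c hc1 (by omega)
      have hocc : Finset.Ico 1 z ∪ Finset.Ico z (z + y) = Finset.Ico 1 (z + y) :=
        Finset.Ico_union_Ico_eq_Ico hz (by omega)
      have hcond : (∀ i ∈ Finset.Ico z (z + y), i ∉ Finset.Ico 1 z) ∧ z + y - 1 ≤ M := by
        constructor
        · intro i hi
          simp only [Finset.mem_Ico] at hi ⊢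
          omega
        · simp [hM]; omega
      have hM2 : M = (z + y) - 1 + ys.sum := by simp [hM]; omega
      rw [show parkAux M (Finset.Ico 1 z) (c :: cs) (y :: ys) =
          (parkAux M (Finset.Ico 1 z ∪ Finset.Ico z (z + y)) cs ys).map (z :: ·) by
        rw [parkAux, hfe]; exact if_pos hcond]
      rw [hocc, hM2]
      have ihh := ih cs (z + y) (by omega) (fun a ha => hy a (by simp [ha]))
        (fun a ha => hc a (by simp [ha])) (by simpa using hlen)
      constructor
      · intro h k hk
        have hmap : parkAux (z + y - 1 + ys.sum) (Finset.Ico 1 (z + y)) cs ys =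
            some (standardStarts (z + y) ys) := by
          cases hpk : parkAux (z + y - 1 + ys.sum) (Finset.Ico 1 (z + y)) cs ys with
          | none => rw [hpk] at h; simp [standardStarts] at h
          | some l =>
            rw [hpk] at h
            simp [standardStarts] at h
            exact congrArg some h
        have := ihh.mp hmap
        cases k with
        | zero => simpa using hcz
        | succ k =>
          have hk' : k < ys.length := by simpa using hk
          have := this k hk'
          simp at this ⊢
          omega
      · intro h
        have h0 : c ≤ z := by simpa using h 0 (by simp)
        have hrest : ∀ k < ys.length, cs.getD k 0 ≤ z + y + (ys.take k).sum := by
          intro k hk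
          have := h (k + 1) (by simpa using hk)
          simp at this ⊢
          omega
        rw [ihh.mpr hrest]
        simp [standardStarts]
    · -- c > z : both sides false
      constructor
      · intro h
        exfalso
        cases hfe : firstEmpty (Finset.Ico 1 z) M c with
        | none => simp [parkAux, hfe] at h
        | some j =>
          have hj : c ≤ j := firstEmpty_ge hfe
          simp only [parkAux, hfe] at h
          by_cases hcond : (∀ i ∈ Finset.Ico j (j + y), i ∉ Finset.Ico 1 z) ∧ j + y - 1 ≤ M
          · rw [if_pos hcond] at h
            cases hpk : parkAux M (Finset.Ico 1 z ∪ Finset.Ico j (j + y)) cs ys with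
            | none => rw [hpk] at h; simp [standardStarts] at h
            | some l =>
              rw [hpk] at h
              simp [standardStarts] at h
              omega
          · rw [if_neg hcond] at h; simp at h
      · intro h
        exfalso
        have := h 0 (by simp)
        simp at this
        omega

theorem stmt16 (z : ℕ) (hz : 0 < z) (ys cs : List ℕ) (hypos : ∀ y ∈ ys, 0 < y)
    (hps : IsParkingSeq ys cs z) :
    ParksStandard ys cs z ↔ ∀ k < ys.length, cs.getD k 0 ≤ z + (ys.take k).sum := by
  obtain ⟨hlen, hc, _⟩ := hps
  exact park_main ys cs z hz hypos hc hlen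
end

section
/- Let n, k, z ∈ Z_+ with 1 ≤ k ≤ n. Then the set of k-strong parking sequences for (n;z) — sequences c of length k that are strong parking sequences for every composition (n_1,...,n_k) of n into k positive parts — equals the set of strong parking sequences for the single composition y_0 = (1,1,...,1, n-k+1). Consequently, its cardinality is z(z+1)···(z+k-1) if k < n, and z(n+z)^{n-1} if k = n. -/
open Finset

/- ## Auxiliary development -/



lemma find?_range'_spec (occ : Finset ℕ) (j : ℕ) :
    ∀ (k c : ℕ), ((List.range' c k).find? (fun j => decide (j ∉ occ)) = some j) ↔
      (c ≤ j ∧ j < c + k ∧ j ∉ occ ∧ ∀ x, c ≤ x → x < j → x ∈ occ) := by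
  intro k
  induction k with
  | zero => intro c; simp; omega
  | succ k ih =>
    intro c
    rw [List.range'_succ]
    by_cases hc : c ∈ occ
    · rw [List.find?_cons_of_neg (by simp [hc]), ih (c+1)]
      constructor
      · rintro ⟨h1, h2, h3, h4⟩
        refine ⟨by omega, by omega, h3, fun x hx1 hx2 => ?_⟩
        rcases eq_or_lt_of_le hx1 with rfl | h
        · exact hc
        · exact h4 x h hx2
      · rintro ⟨h1, h2, h3, h4⟩
        have : c ≠ j := by rintro rfl; exact h3 hc
        exact ⟨by omega, by omega, h3, fun x hx1 hx2 => h4 x (by omega) hx2⟩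
    · rw [List.find?_cons_of_pos (by simp [hc]), Option.some_inj]
      constructor
      · rintro rfl
        exact ⟨le_refl _, by omega, hc, fun x hx1 hx2 => by omega⟩
      · rintro ⟨h1, h2, h3, h4⟩
        by_contra hne
        exact hc (h4 c (le_refl c) (by omega))

lemma firstEmpty_eq_some_iff {occ : Finset ℕ} {M c j : ℕ} :
    firstEmpty occ M c = some j ↔
      (c ≤ j ∧ j ≤ M ∧ j ∉ occ ∧ ∀ x, c ≤ x → x < j → x ∈ occ) := by
  rw [firstEmpty, find?_range'_spec]
  constructor
  · rintro ⟨h1, h2, h3, h4⟩; exact ⟨h1, by omega, h3, h4⟩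
  · rintro ⟨h1, h2, h3, h4⟩; exact ⟨h1, by omega, h3, h4⟩

lemma firstEmpty_isSome_of {occ : Finset ℕ} {M c x : ℕ} (hcx : c ≤ x) (hxM : x ≤ M)
    (hx : x ∉ occ) : ∃ j, firstEmpty occ M c = some j := by
  cases h : firstEmpty occ M c with
  | some j => exact ⟨j, rfl⟩
  | none =>
    rw [firstEmpty, List.find?_eq_none] at h
    have hmem : x ∈ List.range' c (M + 1 - c) := by
      rw [List.mem_range']
      exact ⟨x - c, by omega, by omega⟩
    exact absurd (by simpa using h x hmem) (by simpa using hx)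

/- ## parkAux step lemmas -/

lemma parkAux_cons_some {M : ℕ} {occ : Finset ℕ} {c y : ℕ} {cs ys : List ℕ}
    (h : (parkAux M occ (c :: cs) (y :: ys)).isSome = true) :
    ∃ j, firstEmpty occ M c = some j ∧ (∀ i ∈ Finset.Ico j (j + y), i ∉ occ) ∧
      j + y - 1 ≤ M ∧ (parkAux M (occ ∪ Finset.Ico j (j + y)) cs ys).isSome = true := by
  rw [parkAux] at h
  split at h
  · simp at h
  · rename_i j heq
    split at h
    · rename_i hif
      exact ⟨j, heq, hif.1, hif.2, by simpa using h⟩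
    · simp at h

lemma parkAux_cons_build {M : ℕ} {occ : Finset ℕ} {c : ℕ} {cs ys : List ℕ} {j : ℕ}
    (hfe : firstEmpty occ M c = some j)
    (h : (parkAux M (occ ∪ {j}) cs ys).isSome = true) :
    (parkAux M occ (c :: cs) (1 :: ys)).isSome = true := by
  obtain ⟨-, hjM, hj, -⟩ := firstEmpty_eq_some_iff.mp hfe
  have hIco : Finset.Ico j (j + 1) = {j} := by
    rw [Finset.Ico_add_one_right_eq_Icc, Finset.Icc_self]
  rw [parkAux, hfe]
  show (if (∀ i ∈ Finset.Ico j (j + 1), i ∉ occ) ∧ j + 1 - 1 ≤ M then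
        (parkAux M (occ ∪ Finset.Ico j (j + 1)) cs ys).map (j :: ·)
      else none).isSome = true
  rw [if_pos ⟨by simp [hIco, hj], by omega⟩, hIco]
  simpa using h

/- ## Sufficiency: interval invariant -/

lemma parkAux_interval : ∀ (ys cs : List ℕ) (b M : ℕ), 1 ≤ b → b + ys.sum = M + 1 →
    cs.length = ys.length → (∀ y ∈ ys, 1 ≤ y) →
    (∀ p, p < cs.length → 1 ≤ cs.getD p 0 ∧ cs.getD p 0 ≤ b + p) →
    parkAux M (Finset.Ico 1 b) cs ys = some (standardStarts b ys) := by
  intro ys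
  induction ys with
  | nil =>
    intro cs b M hb hM hlen hys hcs
    rw [List.length_nil, List.length_eq_zero_iff] at hlen
    subst hlen
    simp [parkAux, standardStarts]
  | cons y ys ih =>
    intro cs b M hb hM hlen hys hcs
    cases cs with
    | nil => simp at hlen
    | cons c cs =>
      have hy1 : 1 ≤ y := hys y (by simp)
      have hysum : b + (y + ys.sum) = M + 1 := by simpa using hM
      have hc := hcs 0 (by simp)
      simp only [List.getD_cons_zero] at hc
      have hbM : b ≤ M := by omega
      have hfe : firstEmpty (Finset.Ico 1 b) M c = some b := by
        rw [firstEmpty_eq_some_iff]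
        refine ⟨by omega, hbM, by simp, fun x hx1 hx2 => ?_⟩
        simp only [Finset.mem_Ico]; omega
      have hcond : (∀ i ∈ Finset.Ico b (b + y), i ∉ Finset.Ico 1 b) ∧ b + y - 1 ≤ M := by
        constructor
        · intro i hi
          simp only [Finset.mem_Ico] at hi ⊢; omega
        · omega
      rw [parkAux, hfe]
      show (if (∀ i ∈ Finset.Ico b (b + y), i ∉ Finset.Ico 1 b) ∧ b + y - 1 ≤ M then
            (parkAux M (Finset.Ico 1 b ∪ Finset.Ico b (b + y)) cs ys).map (b :: ·)
          else none) = some (standardStarts b (y :: ys))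
      rw [if_pos hcond]
      have hunion : Finset.Ico 1 b ∪ Finset.Ico b (b + y) = Finset.Ico 1 (b + y) :=
        Finset.Ico_union_Ico_eq_Ico hb (by omega)
      rw [hunion, ih cs (b + y) M (by omega) (by omega) (by simpa using hlen)
        (fun y' hy' => hys y' (by simp [hy']))
        (fun p hp => by
          have := hcs (p + 1) (by simpa using Nat.succ_lt_succ hp)
          simp only [List.getD_cons_succ] at this
          omega)]
      simp [standardStarts]

/- ## Necessity for k < n : no-gap argument -/

lemma noGap : ∀ (cs : List ℕ) (occ : Finset ℕ) (M m e : ℕ), 2 ≤ m →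
    occ ⊆ Finset.Icc 1 (M + 1 - m) → 1 ≤ e → e ∉ occ → e + 1 ∈ occ →
    (Finset.Icc 1 M \ occ).card + 1 = cs.length + m →
    (∀ c ∈ cs, 1 ≤ c) →
    (∀ p q, p + q + 1 = cs.length →
      (parkAux M occ cs (List.replicate p 1 ++ m :: List.replicate q 1)).isSome = true) →
    False := by
  intro cs
  induction cs with
  | nil =>
    intro occ M m e hm hsub he1 heocc he1occ hcard hpos _
    have hsub' : occ ⊆ Finset.Icc 1 M := hsub.trans (Finset.Icc_subset_Icc_right (by omega))
    have h1 : (Finset.Icc 1 M \ occ).card = (Finset.Icc 1 M).card - occ.card :=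
      Finset.card_sdiff_of_subset hsub'
    have h2 : occ.card ≤ (Finset.Icc 1 (M + 1 - m)).card := Finset.card_le_card hsub
    rw [Nat.card_Icc] at h1 h2
    simp only [List.length_nil] at hcard
    -- occ.card = M + 1 - m  and occ ⊆ Icc 1 (M+1-m) forces equality
    have hocc_card : occ.card = M + 1 - m := by omega
    have hocc_eq : occ = Finset.Icc 1 (M + 1 - m) := by
      apply Finset.eq_of_subset_of_card_le hsub
      rw [Nat.card_Icc]; omega
    -- e+1 ∈ occ so e + 1 ≤ M+1-m, hence e ∈ Icc 1 (M+1-m) = occ, contradiction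
    rw [hocc_eq] at he1occ heocc
    rw [Finset.mem_Icc] at he1occ heocc
    omega
  | cons c cs ih =>
    intro occ M m e hm hsub he1 heocc he1occ hcard hpos hbig
    -- big at position 0
    obtain ⟨j, hfe, hblock, hfit, -⟩ := parkAux_cons_some
      (by simpa using hbig 0 cs.length (by simp))
    obtain ⟨hcj, hjM, hjocc, -⟩ := firstEmpty_eq_some_iff.mp hfe
    have hj1 : 1 ≤ j := le_trans (hpos c (by simp)) hcj
    have hjsucc : j + 1 ∉ occ := hblock (j+1) (by rw [Finset.mem_Ico]; omega)
    have hej : e ≠ j := by rintro rfl; exact hjsucc he1occ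
    apply ih (occ ∪ {j}) M m e hm ?_ he1 ?_ (by simp [he1occ]) ?_
      (fun c' hc' => hpos c' (by simp [hc'])) ?_
    · intro x hx
      rcases Finset.mem_union.mp hx with hx | hx
      · exact hsub hx
      · rw [Finset.mem_singleton] at hx
        subst hx
        rw [Finset.mem_Icc]; omega
    · simp only [Finset.mem_union, Finset.mem_singleton]
      push_neg
      exact ⟨heocc, hej⟩
    · have hjmem : j ∈ Finset.Icc 1 M \ occ := by
        rw [Finset.mem_sdiff, Finset.mem_Icc]; exact ⟨⟨hj1, hjM⟩, hjocc⟩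
      have : Finset.Icc 1 M \ (occ ∪ {j}) = (Finset.Icc 1 M \ occ).erase j := by
        ext x
        simp only [Finset.mem_sdiff, Finset.mem_union, Finset.mem_singleton, Finset.mem_erase]
        tauto
      rw [this, Finset.card_erase_of_mem hjmem]
      simp only [List.length_cons] at hcard ⊢
      have : 1 ≤ (Finset.Icc 1 M \ occ).card := Finset.card_pos.mpr ⟨j, hjmem⟩
      omega
    · intro p q hpq
      have := hbig (p+1) q (by simp; omega)
      rw [List.replicate_succ, List.cons_append] at this
      obtain ⟨j2, hfe2, -, -, htail⟩ := parkAux_cons_some this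
      rw [hfe] at hfe2
      obtain rfl : j = j2 := Option.some_inj.mp hfe2
      have hIco : Finset.Ico j (j + 1) = {j} := by rw [Finset.Ico_add_one_right_eq_Icc, Finset.Icc_self]
      -- htail is for occ ∪ Ico j (j+1)
      rw [hIco] at htail
      exact htail

lemma mustBeLow : ∀ (cs : List ℕ) (b M m : ℕ), 2 ≤ m → 1 ≤ b →
    b + cs.length + m = M + 2 →
    (∀ c ∈ cs, 1 ≤ c) →
    (∀ p q, p + q + 1 = cs.length →
      (parkAux M (Finset.Ico 1 b) cs (List.replicate p 1 ++ m :: List.replicate q 1)).isSome = true) →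
    ∀ p, p < cs.length → cs.getD p 0 ≤ b + p := by
  intro cs
  induction cs with
  | nil => intro _ _ _ _ _ _ _ _ p hp; simp at hp
  | cons c cs ih =>
    intro b M m hm hb hM hpos hbig
    obtain ⟨j, hfe, hblock, hfit, -⟩ := parkAux_cons_some
      (by simpa using hbig 0 cs.length (by simp))
    obtain ⟨hcj, hjM, hjocc, hjmin⟩ := firstEmpty_eq_some_iff.mp hfe
    have hc1 : 1 ≤ c := hpos c (by simp)
    -- first: c ≤ b
    have hcb : c ≤ b := by
      by_contra hcb
      push_neg at hcb   -- b < c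
      have hjc : j = c := by
        rcases eq_or_lt_of_le hcj with h | h
        · exact h.symm
        · exact absurd (hjmin c (le_refl c) h) (by rw [Finset.mem_Ico]; omega)
      subst hjc
      -- apply noGap with occ' = Ico 1 b ∪ {j}, e = j - 1
      -- peel unit steps from hbig (p+1) q
      apply noGap cs (Finset.Ico 1 b ∪ {j}) M m (j - 1) hm ?_ (by omega) ?_ ?_ ?_
        (fun c' hc' => hpos c' (by simp [hc'])) ?_
      · intro x hx
        rcases Finset.mem_union.mp hx with hx | hx
        · rw [Finset.mem_Ico] at hx; rw [Finset.mem_Icc]; omega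
        · rw [Finset.mem_singleton] at hx; subst hx; rw [Finset.mem_Icc]; omega
      · simp only [Finset.mem_union, Finset.mem_singleton, Finset.mem_Ico]
        push_neg
        constructor
        · intro h1; omega
        · omega
      · have : j - 1 + 1 = j := by omega
        rw [this]
        simp
      · have hsub : Finset.Ico 1 b ∪ {j} ⊆ Finset.Icc 1 M := by
          intro x hx
          rcases Finset.mem_union.mp hx with hx | hx
          · rw [Finset.mem_Ico] at hx; rw [Finset.mem_Icc]; omega
          · rw [Finset.mem_singleton] at hx; subst hx; rw [Finset.mem_Icc]; omega
        rw [Finset.card_sdiff_of_subset hsub, Finset.card_union_of_disjoint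
          (by simp [Finset.disjoint_singleton_right, Finset.mem_Ico]; omega)]
        rw [Nat.card_Icc, Nat.card_Ico, Finset.card_singleton]
        simp only [List.length_cons] at hM
        omega
      · intro p q hpq
        have := hbig (p+1) q (by simp; omega)
        rw [List.replicate_succ, List.cons_append] at this
        obtain ⟨j2, hfe2, -, -, htail⟩ := parkAux_cons_some this
        rw [hfe] at hfe2
        obtain rfl : j = j2 := Option.some_inj.mp hfe2
        rw [Finset.Ico_add_one_right_eq_Icc, Finset.Icc_self] at htail
        exact htail
    -- now j = b
    have hjb : j = b := by
      by_contra hne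
      rcases Nat.lt_or_ge j b with h' | h'
      · exact hjocc (Finset.mem_Ico.mpr ⟨by omega, h'⟩)
      · have : b ∈ Finset.Ico 1 b := hjmin b hcb (by omega)
        rw [Finset.mem_Ico] at this; omega
    subst hjb
    intro p hp
    cases p with
    | zero => simpa using hcb
    | succ p =>
      rw [List.getD_cons_succ]
      have hres := ih (j+1) M m hm (by omega) (by simp at hM ⊢; omega)
        (fun c' hc' => hpos c' (by simp [hc'])) ?_ p (by simpa using hp)
      · omega
      · intro p' q' hpq'
        have := hbig (p'+1) q' (by simp; omega)
        rw [List.replicate_succ, List.cons_append] at this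
        obtain ⟨j2, hfe2, -, -, htail⟩ := parkAux_cons_some this
        rw [hfe] at hfe2
        obtain rfl : j = j2 := Option.some_inj.mp hfe2
        rw [Finset.Ico_add_one_right_eq_Icc, Finset.Icc_self] at htail
        have hun : Finset.Ico 1 j ∪ {j} = Finset.Ico 1 (j+1) := by
          rw [Finset.union_comm]
          ext x
          simp only [Finset.mem_union, Finset.mem_singleton, Finset.mem_Ico]
          omega
        rwa [hun] at htail

/- ## Unit cars: success ↔ counting condition -/

lemma forward_count : ∀ (cs : List ℕ) (occ : Finset ℕ) (M : ℕ),
    (∀ c ∈ cs, 1 ≤ c) →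
    (parkAux M occ cs (List.replicate cs.length 1)).isSome = true →
    (Finset.Icc 1 M \ occ).card = cs.length →
    ∀ t, t ≤ M → (Finset.Icc 1 t \ occ).card ≤ cs.countP (fun c => decide (c ≤ t)) := by
  intro cs
  induction cs with
  | nil =>
    intro occ M _ _ hcard t ht
    simp only [List.length_nil] at hcard
    have : Finset.Icc 1 t \ occ ⊆ Finset.Icc 1 M \ occ :=
      Finset.sdiff_subset_sdiff (Finset.Icc_subset_Icc_right ht) (le_refl _)
    have := Finset.card_le_card this
    rw [List.countP_nil]
    omega
  | cons c cs ih =>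
    intro occ M hpos hsome hcard t ht
    rw [List.length_cons, List.replicate_succ] at hsome
    obtain ⟨j, hfe, -, -, htail⟩ := parkAux_cons_some hsome
    obtain ⟨hcj, hjM, hjocc, -⟩ := firstEmpty_eq_some_iff.mp hfe
    rw [Finset.Ico_add_one_right_eq_Icc, Finset.Icc_self] at htail
    have hj1 : 1 ≤ j := le_trans (hpos c (by simp)) hcj
    have hjmem : j ∈ Finset.Icc 1 M \ occ := by
      rw [Finset.mem_sdiff, Finset.mem_Icc]; exact ⟨⟨hj1, hjM⟩, hjocc⟩
    have hcard' : (Finset.Icc 1 M \ (occ ∪ {j})).card = cs.length := by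
      have : Finset.Icc 1 M \ (occ ∪ {j}) = (Finset.Icc 1 M \ occ).erase j := by
        ext x
        simp only [Finset.mem_sdiff, Finset.mem_union, Finset.mem_singleton, Finset.mem_erase]
        tauto
      rw [this, Finset.card_erase_of_mem hjmem]
      simp only [List.length_cons] at hcard
      omega
    have IH := ih (occ ∪ {j}) M (fun c' hc' => hpos c' (by simp [hc'])) htail hcard'
    rw [List.countP_cons]
    by_cases hjt : j ≤ t
    · have hjmem' : j ∈ Finset.Icc 1 t \ occ := by
        rw [Finset.mem_sdiff, Finset.mem_Icc]; exact ⟨⟨hj1, hjt⟩, hjocc⟩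
      have heq : Finset.Icc 1 t \ (occ ∪ {j}) = (Finset.Icc 1 t \ occ).erase j := by
        ext x
        simp only [Finset.mem_sdiff, Finset.mem_union, Finset.mem_singleton, Finset.mem_erase]
        tauto
      have h1 := IH t ht
      rw [heq, Finset.card_erase_of_mem hjmem'] at h1
      have hct : c ≤ t := le_trans hcj hjt
      simp only [decide_eq_true hct, if_true]
      have : 1 ≤ (Finset.Icc 1 t \ occ).card := Finset.card_pos.mpr ⟨j, hjmem'⟩
      omega
    · have heq : Finset.Icc 1 t \ (occ ∪ {j}) = Finset.Icc 1 t \ occ := by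
        ext x
        simp only [Finset.mem_sdiff, Finset.mem_union, Finset.mem_singleton, Finset.mem_Icc]
        constructor
        · tauto
        · rintro ⟨h1, h2⟩
          refine ⟨h1, ?_⟩
          rintro (h | rfl)
          · exact h2 h
          · omega
      have h1 := IH t ht
      rw [heq] at h1
      omega

lemma backward_count : ∀ (cs : List ℕ) (occ : Finset ℕ) (M : ℕ),
    (∀ c ∈ cs, 1 ≤ c) →
    (Finset.Icc 1 M \ occ).card = cs.length →
    (∀ t, t ≤ M → (Finset.Icc 1 t \ occ).card ≤ cs.countP (fun c => decide (c ≤ t))) →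
    (parkAux M occ cs (List.replicate cs.length 1)).isSome = true := by
  intro cs
  induction cs with
  | nil => intro occ M _ _ _; rw [List.length_nil]; simp [parkAux]
  | cons c cs ih =>
    intro occ M hpos hcard hcnt
    have hc1 : 1 ≤ c := hpos c (by simp)
    -- all entries ≤ M
    have hallM : ∀ x ∈ c :: cs, x ≤ M := by
      have hall := hcnt M (le_refl M)
      rw [hcard] at hall
      have hle : (c :: cs).countP (fun c => decide (c ≤ M)) ≤ (c :: cs).length :=
        List.countP_le_length
      have heq := List.countP_eq_length.mp (le_antisymm hle hall)
      intro x hx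
      simpa using heq x hx
    have hcM : c ≤ M := hallM c (by simp)
    -- there is an empty spot in [c, M]
    have hex : ∃ x, c ≤ x ∧ x ≤ M ∧ x ∉ occ := by
      by_contra hex
      push_neg at hex
      have hsubs : Finset.Icc 1 M \ occ ⊆ Finset.Icc 1 (c-1) \ occ := by
        intro x hx
        rw [Finset.mem_sdiff, Finset.mem_Icc] at hx ⊢
        refine ⟨⟨hx.1.1, ?_⟩, hx.2⟩
        by_contra hxc
        push_neg at hxc
        exact hx.2 (hex x (by omega) hx.1.2)
      have h1 := Finset.card_le_card hsubs
      have h2 := hcnt (c-1) (by omega)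
      rw [hcard] at h1
      rw [List.countP_cons] at h2
      have hcc : ¬ (c ≤ c - 1) := by omega
      simp only [decide_eq_false hcc, Bool.false_eq_true, if_false] at h2
      have h3 : cs.countP (fun x => decide (x ≤ c - 1)) ≤ cs.length := List.countP_le_length
      have hlen : (c :: cs).length = cs.length + 1 := rfl
      omega
    obtain ⟨x, hx1, hx2, hx3⟩ := hex
    obtain ⟨j, hfe⟩ := firstEmpty_isSome_of hx1 hx2 hx3
    obtain ⟨hcj, hjM, hjocc, hjmin⟩ := firstEmpty_eq_some_iff.mp hfe
    have hj1 : 1 ≤ j := le_trans hc1 hcj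
    have hjmem : j ∈ Finset.Icc 1 M \ occ := by
      rw [Finset.mem_sdiff, Finset.mem_Icc]; exact ⟨⟨hj1, hjM⟩, hjocc⟩
    have herase : Finset.Icc 1 M \ (occ ∪ {j}) = (Finset.Icc 1 M \ occ).erase j := by
      ext y
      simp only [Finset.mem_sdiff, Finset.mem_union, Finset.mem_singleton, Finset.mem_erase]
      tauto
    rw [List.length_cons, List.replicate_succ]
    apply parkAux_cons_build hfe
    apply ih (occ ∪ {j}) M (fun c' hc' => hpos c' (by simp [hc']))
    · rw [herase, Finset.card_erase_of_mem hjmem, hcard]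
      simp
    · intro t ht
      by_cases hjt : j ≤ t
      · have hjmem' : j ∈ Finset.Icc 1 t \ occ := by
          rw [Finset.mem_sdiff, Finset.mem_Icc]; exact ⟨⟨hj1, hjt⟩, hjocc⟩
        have heq : Finset.Icc 1 t \ (occ ∪ {j}) = (Finset.Icc 1 t \ occ).erase j := by
          ext y
          simp only [Finset.mem_sdiff, Finset.mem_union, Finset.mem_singleton, Finset.mem_erase]
          tauto
        have h1 := hcnt t ht
        rw [List.countP_cons] at h1
        have hct : c ≤ t := le_trans hcj hjt
        simp only [decide_eq_true hct, if_true] at h1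
        rw [heq, Finset.card_erase_of_mem hjmem']
        omega
      · have heq : Finset.Icc 1 t \ (occ ∪ {j}) = Finset.Icc 1 t \ occ := by
          ext y
          simp only [Finset.mem_sdiff, Finset.mem_union, Finset.mem_singleton, Finset.mem_Icc]
          constructor
          · tauto
          · rintro ⟨h1, h2⟩
            refine ⟨h1, ?_⟩
            rintro (h | rfl)
            · exact h2 h
            · omega
        rw [heq]
        by_cases hct : c ≤ t
        · -- [c, t] ⊆ occ by minimality of j
          have heq2 : Finset.Icc 1 t \ occ = Finset.Icc 1 (c-1) \ occ := by
            ext y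
            rw [Finset.mem_sdiff, Finset.mem_sdiff, Finset.mem_Icc, Finset.mem_Icc]
            constructor
            · rintro ⟨⟨hy1, hy2⟩, hy3⟩
              refine ⟨⟨hy1, ?_⟩, hy3⟩
              by_contra hyc
              push_neg at hyc
              exact hy3 (hjmin y (by omega) (by omega))
            · rintro ⟨⟨hy1, hy2⟩, hy3⟩
              exact ⟨⟨hy1, by omega⟩, hy3⟩
          rw [heq2]
          have h1 := hcnt (c-1) (by omega)
          rw [List.countP_cons] at h1
          have hcc : ¬ (c ≤ c - 1) := by omega
          simp only [decide_eq_false hcc, Bool.false_eq_true, if_false] at h1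
          have hmono : cs.countP (fun x => decide (x ≤ c - 1)) ≤
              cs.countP (fun x => decide (x ≤ t)) :=
            List.countP_mono_left (fun x _ hx => by
              simp only [decide_eq_true_eq] at hx ⊢; omega)
          omega
        · have h1 := hcnt t ht
          rw [List.countP_cons] at h1
          simp only [decide_eq_false hct, Bool.false_eq_true, if_false] at h1
          omega

/- ## Characterization for all-unit cars -/

lemma Icc_sdiff_Ico (z t : ℕ) (hz : 1 ≤ z) :
    Finset.Icc 1 t \ Finset.Ico 1 z = Finset.Icc z t := by
  ext x
  simp only [Finset.mem_sdiff, Finset.mem_Icc, Finset.mem_Ico, not_and, not_lt]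
  omega

lemma unit_park_iff (n z : ℕ) (hz : 1 ≤ z) (cs : List ℕ) :
    IsParkingSeq (List.replicate n 1) cs z ↔
      (cs.length = n ∧ (∀ c ∈ cs, 1 ≤ c) ∧
        ∀ t, t ≤ z - 1 + n → t + 1 ≤ z + cs.countP (fun c => decide (c ≤ t))) := by
  have hM : z - 1 + n + 1 = z + n := by omega
  have hsum : (List.replicate n 1).sum = n := by simp
  have hcard0 : (Finset.Icc 1 (z - 1 + n) \ Finset.Ico 1 z).card = n := by
    rw [Icc_sdiff_Ico z _ hz, Nat.card_Icc]; omega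
  constructor
  · rintro ⟨hlen, hpos, hsome⟩
    rw [List.length_replicate] at hlen
    refine ⟨hlen, hpos, fun t ht => ?_⟩
    rw [parkResult, hsum] at hsome
    have hrep : List.replicate n 1 = List.replicate cs.length 1 := by rw [hlen]
    rw [hrep] at hsome
    have := forward_count cs (Finset.Ico 1 z) (z - 1 + n) hpos hsome (by rw [hcard0, hlen]) t ht
    rw [Icc_sdiff_Ico z _ hz, Nat.card_Icc] at this
    omega
  · rintro ⟨hlen, hpos, hcnt⟩
    refine ⟨by simp [hlen], hpos, ?_⟩
    rw [parkResult, hsum]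
    have hrep : List.replicate n 1 = List.replicate cs.length 1 := by rw [hlen]
    rw [hrep]
    apply backward_count cs (Finset.Ico 1 z) (z - 1 + n) hpos
    · rw [hcard0, hlen]
    · intro t ht
      rw [Icc_sdiff_Ico z _ hz, Nat.card_Icc]
      have := hcnt t ht
      omega

/- ## The cyclic walk -/

section Walk

variable {n N : ℕ} (a : Fin n → ZMod N)

def Dfun (v : ℕ) : ℕ := (Finset.univ.filter (fun i => a i = (v : ZMod N))).card

def Afun (t : ℕ) : ℕ := ∑ x ∈ Finset.Ico 1 (t+1), Dfun a x

def Wfun (t : ℕ) : ℤ := (Afun a t : ℤ) - t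

variable [NeZero N]

lemma window_sum (u : ℕ) : ∑ x ∈ Finset.Ico u (u + N), Dfun a x = n := by
  have key := Finset.card_eq_sum_card_fiberwise
    (f := fun i : Fin n => u + ((a i - (u : ZMod N)).val)) (s := Finset.univ)
    (t := Finset.Ico u (u + N))
    (fun i _ => by
      show u + ((a i - (u : ZMod N)).val) ∈ Finset.Ico u (u + N)
      rw [Finset.mem_Ico]
      have := ZMod.val_lt (a i - (u : ZMod N)); omega)
  have h3 : ∑ x ∈ Finset.Ico u (u + N), Dfun a x =
      ∑ x ∈ Finset.Ico u (u + N),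
        (Finset.univ.filter (fun i : Fin n => u + ((a i - (u : ZMod N)).val) = x)).card := by
    apply Finset.sum_congr rfl
    intro x hx
    rw [Finset.mem_Ico] at hx
    rw [Dfun]
    congr 1
    ext i
    simp only [Finset.mem_filter, Finset.mem_univ, true_and, Dfun]
    constructor
    · rintro h
      rw [h]
      have hxu : (x : ZMod N) - (u : ZMod N) = ((x - u : ℕ) : ZMod N) := by
        have hx' : x = (x - u) + u := by omega
        rw [hx', Nat.cast_add]
        ring_nf
        rw [Nat.add_sub_cancel]
      rw [hxu, ZMod.val_cast_of_lt (by omega)]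
      omega
    · rintro h
      have hval : (a i - (u : ZMod N)).val = x - u := by omega
      have h1 : a i - (u : ZMod N) = ((x - u : ℕ) : ZMod N) := by
        rw [← hval, ZMod.natCast_rightInverse _]
      have h2 : a i = ((x - u : ℕ) : ZMod N) + (u : ZMod N) := by
        rw [← h1]; ring
      rw [h2, ← Nat.cast_add, Nat.sub_add_cancel hx.1]
  rw [h3, ← key]
  simp

lemma Afun_add (t : ℕ) : Afun a (t + N) = Afun a t + n := by
  have hw := window_sum a (t + 1)
  have hs := Finset.sum_Ico_consecutive (Dfun a)
    (by omega : 1 ≤ t + 1) (by omega : t + 1 ≤ t + N + 1)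
  have he : t + 1 + N = t + N + 1 := by omega
  rw [he] at hw
  rw [Afun, Afun]
  omega

lemma Afun_succ (t : ℕ) : Afun a (t + 1) = Afun a t + Dfun a (t + 1) := by
  rw [Afun, Afun, Finset.sum_Ico_succ_top (by omega : 1 ≤ t + 1)]

lemma Wfun_add {z : ℕ} (hN : N = n + z) (t : ℕ) : Wfun a (t + N) = Wfun a t - z := by
  rw [Wfun, Wfun, Afun_add]
  subst hN
  push_cast
  ring

lemma Wfun_step (t : ℕ) : Wfun a (t + 1) = Wfun a t + Dfun a (t + 1) - 1 := by
  rw [Wfun, Wfun, Afun_succ]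
  push_cast
  ring

omit [NeZero N] in
lemma Wfun_zero : Wfun a 0 = 0 := by simp [Wfun, Afun]

end Walk

/- ## Counting strict record positions -/

section Walk2

variable {n N : ℕ} (a : Fin n → ZMod N) [NeZero N]

open Classical in
noncomputable def RecSet (L R : ℕ) : Finset ℕ :=
  (Finset.Ico L R).filter (fun τ => ∀ j < τ, Wfun a τ < Wfun a j)

lemma W_mulN {z : ℕ} (hN : N = n + z) (k : ℕ) : Wfun a (k * N) = -(k * z) := by
  induction k with
  | zero => simpa using Wfun_zero a
  | succ k ih =>
    have : (k+1) * N = k * N + N := by ring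
    rw [this, Wfun_add a hN, ih]
    push_cast
    ring

lemma recset_card {z : ℕ} (hz : 1 ≤ z) (hN : N = n + z) :
    (RecSet a N (2*N)).card = z := by
  have hN0 : 0 < N := Nat.pos_of_ne_zero (NeZero.ne N)
  have hne : ((Finset.range N).image (Wfun a)).Nonempty :=
    Finset.Nonempty.image (Finset.nonempty_range_iff.mpr (by omega)) _
  set m1 := ((Finset.range N).image (Wfun a)).min' hne with hm1def
  have hm1_le : ∀ j, j < N → m1 ≤ Wfun a j := fun j hj =>
    Finset.min'_le _ _ (Finset.mem_image_of_mem _ (Finset.mem_range.mpr hj))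
  obtain ⟨j0, hj0N, hj0⟩ : ∃ j0, j0 < N ∧ Wfun a j0 = m1 := by
    have := Finset.min'_mem _ hne
    rw [Finset.mem_image] at this
    obtain ⟨j0, hj0, h⟩ := this
    exact ⟨j0, Finset.mem_range.mp hj0, h⟩
  have hm1_nonpos : m1 ≤ 0 := by
    have := hm1_le 0 hN0
    rw [Wfun_zero] at this
    omega
  -- existence of arbitrarily low values
  have hex : ∀ v : ℤ, v ≤ m1 - 1 → ∃ t, Wfun a t ≤ v := by
    intro v hv
    refine ⟨((-v).toNat) * N, ?_⟩
    rw [W_mulN a hN]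
    have h1 : (0:ℤ) ≤ (-v).toNat := Int.ofNat_nonneg _
    have h2 : ((-v).toNat : ℤ) = -v := Int.toNat_of_nonneg (by omega)
    have h3 : (1:ℤ) ≤ z := by exact_mod_cast hz
    nlinarith
  have hcard : (Finset.Icc (m1 - z) (m1 - 1)).card = z := by
    rw [Int.card_Icc]
    have : m1 - 1 + 1 - (m1 - z) = (z : ℤ) := by ring
    rw [this, Int.toNat_natCast]
  rw [← hcard]
  apply Finset.card_bij (fun τ _ => Wfun a τ)
  · -- maps into
    intro τ hτ
    rw [RecSet, Finset.mem_filter, Finset.mem_Ico] at hτ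
    obtain ⟨⟨hτ1, hτ2⟩, hP⟩ := hτ
    rw [Finset.mem_Icc]
    constructor
    · -- W τ ≥ m1 - z
      have hu : τ = (τ - N) + N := by omega
      have := Wfun_add a hN (τ - N)
      rw [← hu] at this
      have := hm1_le (τ - N) (by omega)
      omega
    · -- W τ ≤ m1 - 1
      have := hP j0 (by omega)
      omega
  · -- injective
    intro τ1 hτ1 τ2 hτ2 heq
    rw [RecSet, Finset.mem_filter, Finset.mem_Ico] at hτ1 hτ2
    by_contra hne2
    rcases lt_trichotomy τ1 τ2 with h | h | h
    · have := hτ2.2 τ1 h; omega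
    · exact hne2 h
    · have := hτ1.2 τ2 h; omega
  · -- surjective
    intro v hv
    rw [Finset.mem_Icc] at hv
    have hfind := hex v (by omega)
    classical
    obtain ⟨τ, hWτ, hminτ, hτle⟩ : ∃ τ, Wfun a τ ≤ v ∧ (∀ j, j < τ → v < Wfun a j) ∧
        τ ≤ j0 + N := by
      refine ⟨Nat.find hfind, Nat.find_spec hfind, ?_, ?_⟩
      · intro j hj
        have := Nat.find_min hfind hj
        omega
      · apply Nat.find_le
        rw [Wfun_add a hN, hj0]
        omega
    have hτpos : τ ≠ 0 := by
      intro h0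
      rw [h0] at hWτ
      rw [Wfun_zero] at hWτ
      omega
    have hWeq : Wfun a τ = v := by
      obtain ⟨τ', rfl⟩ : ∃ τ', τ = τ' + 1 := ⟨τ - 1, by omega⟩
      have hstep := Wfun_step a τ'
      have := hminτ τ' (by omega)
      have hD : (0:ℤ) ≤ Dfun a (τ' + 1) := Int.ofNat_nonneg _
      omega
    have hτN : N ≤ τ := by
      by_contra hτN
      push_neg at hτN
      have := hm1_le τ hτN
      omega
    have hτ2N : τ < 2 * N := by omega
    refine ⟨τ, ?_, hWeq⟩
    rw [RecSet, Finset.mem_filter, Finset.mem_Ico]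
    refine ⟨⟨hτN, hτ2N⟩, fun j hj => ?_⟩
    have := hminτ j hj
    omega

end Walk2

/- ## Good shifts and records -/

section Walk3

open scoped Classical

variable {n N z : ℕ} (a : Fin n → ZMod N) [NeZero N]

noncomputable def shiftCount (s : ZMod N) (t : ℕ) : ℕ :=
  (Finset.univ.filter (fun i => 1 ≤ (a i + s).val ∧ (a i + s).val ≤ t)).card

def GoodShift (z : ℕ) (s : ZMod N) : Prop :=
  ∀ t, 1 ≤ t → t ≤ N - 1 →
    t + 1 ≤ z + (Finset.univ.filter (fun i => 1 ≤ (a i + s).val ∧ (a i + s).val ≤ t)).card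

lemma count_shift (s : ZMod N) (t : ℕ) (ht : t < N) :
    shiftCount a s t + Afun a ((-s).val) = Afun a ((-s).val + t) := by
  have hcast : ∀ x : ZMod N, ((x.val : ℕ) : ZMod N) = x := fun x => ZMod.natCast_rightInverse x
  set σ := (-s).val with hσdef
  have hσcast : (σ : ZMod N) = -s := hcast (-s)
  have hkey : shiftCount a s t = ∑ x ∈ Finset.Ico (σ+1) (σ+1+t), Dfun a x := by
    rw [shiftCount]
    rw [Finset.card_eq_sum_card_fiberwise
      (f := fun i : Fin n => σ + (a i + s).val) (t := Finset.Ico (σ+1) (σ+1+t))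
      (fun i hi => by
        rw [Finset.mem_coe, Finset.mem_filter] at hi
        show σ + (a i + s).val ∈ Finset.Ico (σ+1) (σ+1+t)
        rw [Finset.mem_Ico]
        omega)]
    apply Finset.sum_congr rfl
    intro x hx
    rw [Finset.mem_Ico] at hx
    rw [Dfun]
    congr 1
    ext i
    simp only [Finset.mem_filter, Finset.mem_univ, true_and]
    constructor
    · rintro ⟨⟨h1, h2⟩, h3⟩
      have hu : a i + s = (((a i + s).val : ℕ) : ZMod N) := (hcast _).symm
      have : a i = (((a i + s).val : ℕ) : ZMod N) + (σ : ZMod N) := by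
        rw [hσcast, ← hu]; ring
      rw [this, ← Nat.cast_add]
      congr 1
      omega
    · rintro h
      have hxcast : (x : ZMod N) = (σ : ZMod N) + ((x - σ : ℕ) : ZMod N) := by
        rw [← Nat.cast_add]
        congr 1
        omega
      have h2 : a i + s = ((x - σ : ℕ) : ZMod N) := by
        rw [h, hxcast, hσcast]; ring
      have hval : (a i + s).val = x - σ := by
        rw [h2, ZMod.val_cast_of_lt (by omega)]
      exact ⟨⟨by omega, by omega⟩, by omega⟩
  rw [hkey, Afun, Afun]
  rw [← Finset.sum_Ico_consecutive (Dfun a) (by omega : 1 ≤ σ + 1) (by omega : σ + 1 ≤ σ + t + 1)]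
  have : σ + 1 + t = σ + t + 1 := by omega
  rw [this]
  omega

lemma goodshift_iff_recset (hn : 1 ≤ n) (hz : 1 ≤ z) (hN : N = n + z) (s : ZMod N) :
    GoodShift a z s ↔ ((-s).val + N) ∈ RecSet a N (2*N) := by
  have hN0 : 0 < N := by omega
  set σ := (-s).val with hσdef
  have hσN : σ < N := ZMod.val_lt _
  have hWσN : Wfun a (σ + N) = Wfun a σ - z := Wfun_add a hN σ
  -- translate the counting condition
  have htrans : ∀ t, 1 ≤ t → t ≤ N - 1 →
      ((t + 1 ≤ z + shiftCount a s t) ↔ (Wfun a σ + 1 - z ≤ Wfun a (σ + t))) := by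
    intro t ht1 ht2
    have hc := count_shift a s t (by omega)
    rw [← hσdef] at hc
    have h1 : Wfun a (σ + t) = (Afun a (σ + t) : ℤ) - (σ + t : ℕ) := rfl
    have h2 : Wfun a σ = (Afun a σ : ℤ) - (σ : ℕ) := rfl
    rw [h1, h2]
    push_cast
    omega
  constructor
  · intro hG
    rw [RecSet, Finset.mem_filter, Finset.mem_Ico]
    refine ⟨⟨by omega, by omega⟩, ?_⟩
    have key : ∀ d j, j + d = σ + N → j < σ + N → Wfun a (σ + N) < Wfun a j := by
      intro d
      induction d using Nat.strong_induction_on with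
      | _ d ih =>
        intro j hjd hj
        by_cases hjσ : σ ≤ j
        · set t := j - σ with htdef
          have hjt : j = σ + t := by omega
          rcases Nat.eq_zero_or_pos t with ht0 | ht0
          · rw [hjt, ht0]
            simp only [Nat.add_zero]
            omega
          · have := (htrans t ht0 (by omega)).mp (hG t ht0 (by omega))
            rw [hjt]
            omega
        · push_neg at hjσ
          have hstep : Wfun a (j + N) = Wfun a j - z := Wfun_add a hN j
          have hlt : j + N < σ + N := by omega
          have := ih (d - N) (by omega) (j + N) (by omega) hlt
          omega
    intro j hj
    exact key (σ + N - j) j (by omega) hj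
  · intro hrec
    rw [RecSet, Finset.mem_filter] at hrec
    intro t ht1 ht2
    show t + 1 ≤ z + shiftCount a s t
    rw [htrans t ht1 ht2]
    have := hrec.2 (σ + t) (by omega)
    omega

lemma goodshift_card (hn : 1 ≤ n) (hz : 1 ≤ z) (hN : N = n + z) :
    ((Finset.univ : Finset (ZMod N)).filter (GoodShift a z)).card = z := by
  have h1 : ((Finset.univ : Finset (ZMod N)).filter (GoodShift a z)).card
      = (RecSet a N (2*N)).card := by
    apply Finset.card_nbij' (i := fun s => (-s).val + N)
      (j := fun τ => -(((τ - N : ℕ) : ZMod N)))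
    · intro s hs
      rw [Finset.mem_coe, Finset.mem_filter] at hs
      exact (goodshift_iff_recset a hn hz hN s).mp hs.2
    · intro τ hτ
      have hτIco : τ ∈ Finset.Ico N (2*N) := Finset.mem_of_mem_filter τ hτ
      rw [Finset.mem_Ico] at hτIco
      rw [Finset.mem_coe, Finset.mem_filter]
      refine ⟨Finset.mem_univ _, ?_⟩
      rw [goodshift_iff_recset a hn hz hN]
      have hval : (-(-(((τ - N : ℕ) : ZMod N)))).val = τ - N := by
        rw [neg_neg, ZMod.val_cast_of_lt (by omega)]
      rw [hval]
      have : τ - N + N = τ := by omega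
      rwa [this]
    · intro s _
      show -((((-s).val + N - N : ℕ)) : ZMod N) = s
      have hcast : (((-s).val : ℕ) : ZMod N) = -s := ZMod.natCast_rightInverse (-s)
      have h2 : ((-s).val + N - N : ℕ) = (-s).val := by omega
      rw [h2, hcast, neg_neg]
    · intro τ hτ
      have hτIco : τ ∈ Finset.Ico N (2*N) := Finset.mem_of_mem_filter τ hτ
      rw [Finset.mem_Ico] at hτIco
      show (-(-(((τ - N : ℕ) : ZMod N)))).val + N = τ
      rw [neg_neg, ZMod.val_cast_of_lt (by omega)]
      omega
  rw [h1, recset_card a hz hN]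

end Walk3

/- ## Double counting: number of good functions -/

section Walk4

open scoped Classical

variable {n N z : ℕ} [NeZero N]

lemma goodfun_card (hn : 1 ≤ n) (hz : 1 ≤ z) (hN : N = n + z) :
    ((Finset.univ : Finset (Fin n → ZMod N)).filter (fun f => GoodShift f z 0)).card
      = z * N ^ (n - 1) := by
  have hN0 : 0 < N := by omega
  -- double counting
  have hswap :
      ∑ f : Fin n → ZMod N, ∑ s : ZMod N, (if GoodShift f z s then 1 else 0)
        = ∑ s : ZMod N, ∑ f : Fin n → ZMod N, (if GoodShift f z s then 1 else 0) :=
    Finset.sum_comm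
  have hinner : ∀ f : Fin n → ZMod N,
      ∑ s : ZMod N, (if GoodShift f z s then 1 else 0) = z := by
    intro f
    rw [← Finset.card_filter]
    exact goodshift_card f hn hz hN
  have hshift_eq : ∀ (f : Fin n → ZMod N) (s : ZMod N),
      GoodShift f z s ↔ GoodShift (fun i => f i + s) z 0 := by
    intro f s
    simp only [GoodShift, add_zero]
  have hinner2 : ∀ s : ZMod N,
      ∑ f : Fin n → ZMod N, (if GoodShift f z s then 1 else 0)
        = ((Finset.univ : Finset (Fin n → ZMod N)).filter (fun f => GoodShift f z 0)).card := by
    intro s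
    rw [← Finset.card_filter]
    apply Finset.card_nbij' (i := fun f => fun i => f i + s) (j := fun g => fun i => g i - s)
    · intro f hf
      rw [Finset.mem_coe, Finset.mem_filter] at hf ⊢
      exact ⟨Finset.mem_univ _, (hshift_eq f s).mp hf.2⟩
    · intro g hg
      rw [Finset.mem_coe, Finset.mem_filter] at hg ⊢
      refine ⟨Finset.mem_univ _, ?_⟩
      rw [hshift_eq]
      have : (fun i => g i - s + s) = g := by funext i; ring
      rw [this]
      exact hg.2
    · intro f _; funext i; ring
    · intro g _; funext i; ring
  have htot1 : ∑ f : Fin n → ZMod N, ∑ s : ZMod N, (if GoodShift f z s then 1 else 0)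
      = N ^ n * z := by
    rw [Finset.sum_congr rfl (fun f _ => hinner f), Finset.sum_const, smul_eq_mul]
    congr 1
    rw [Finset.card_univ, Fintype.card_fun, ZMod.card, Fintype.card_fin]
  have htot2 : ∑ s : ZMod N, ∑ f : Fin n → ZMod N, (if GoodShift f z s then 1 else 0)
      = N * ((Finset.univ : Finset (Fin n → ZMod N)).filter (fun f => GoodShift f z 0)).card := by
    rw [Finset.sum_congr rfl (fun s _ => hinner2 s), Finset.sum_const, smul_eq_mul]
    congr 1
    rw [Finset.card_univ, ZMod.card]
  have key : N * ((Finset.univ : Finset (Fin n → ZMod N)).filter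
      (fun f => GoodShift f z 0)).card = N * (z * N ^ (n-1)) := by
    rw [← htot2, ← hswap, htot1]
    have : N ^ n = N * N ^ (n - 1) := by
      conv_lhs => rw [show n = (n-1) + 1 by omega]
      rw [pow_succ]
      ring
    rw [this]
    ring
  exact Nat.eq_of_mul_eq_mul_left hN0 key

end Walk4

/- ## Transfer: k = n count -/

lemma countP_ofFn (p : ℕ → Bool) : ∀ (m : ℕ) (g : Fin m → ℕ),
    (List.ofFn g).countP p = ∑ i : Fin m, if p (g i) then 1 else 0 := by
  intro m
  induction m with
  | zero => intro g; simp
  | succ m ih =>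
    intro g
    rw [List.ofFn_succ, List.countP_cons, Fin.sum_univ_succ, ih]
    omega

lemma allones_ncard (n z : ℕ) (hn : 1 ≤ n) (hz : 1 ≤ z) :
    {cs : List ℕ | IsParkingSeq (List.replicate n 1) cs z}.ncard = z * (n + z) ^ (n - 1) := by
  classical
  haveI : NeZero (n + z) := ⟨by omega⟩
  set N := n + z with hNdef
  set Ψ : (Fin n → ZMod N) → List ℕ := fun f => List.ofFn (fun i => (f i).val) with hΨdef
  set T := ((Finset.univ : Finset (Fin n → ZMod N)).filter (fun f => GoodShift f z 0)) with hTdef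
  have hM : z - 1 + n = N - 1 := by omega
  have hseteq : {cs : List ℕ | IsParkingSeq (List.replicate n 1) cs z} = Ψ '' ↑T := by
    ext cs
    simp only [Set.mem_setOf_eq, Set.mem_image, Finset.coe_filter, Set.mem_setOf_eq,
      Finset.mem_univ, true_and, Finset.mem_coe, Finset.mem_filter, hTdef]
    rw [unit_park_iff n z hz cs]
    constructor
    · rintro ⟨hlen, hpos, hcnt⟩
      -- all entries ≤ N - 1
      have hallM : ∀ x ∈ cs, x ≤ N - 1 := by
        have h1 := hcnt (z - 1 + n) (le_refl _)
        have h2 : cs.countP (fun c => decide (c ≤ z - 1 + n)) ≤ cs.length :=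
          List.countP_le_length
        have h3 : cs.countP (fun c => decide (c ≤ z - 1 + n)) = cs.length := by omega
        intro x hx
        have := List.countP_eq_length.mp h3 x hx
        simp only [decide_eq_true_eq] at this
        omega
      set f : Fin n → ZMod N := fun i => ((cs.getD i.val 0 : ℕ) : ZMod N) with hfdef
      have hgetlt : ∀ i : Fin n, cs.getD i.val 0 = cs[i.val]'(by omega) :=
        fun i => List.getD_eq_getElem cs 0 (by omega)
      have hvals : ∀ i : Fin n, (f i).val = cs.getD i.val 0 := by
        intro i
        rw [hfdef]
        apply ZMod.val_cast_of_lt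
        have hmem : cs.getD i.val 0 ∈ cs := by
          rw [hgetlt i]
          exact List.getElem_mem _
        have := hallM _ hmem
        omega
      have hΨf : Ψ f = cs := by
        apply List.ext_getElem (by simp [hΨdef, hlen])
        intro p h1 h2
        have hp : p < n := by simpa [hΨdef] using h1
        simp only [hΨdef, List.getElem_ofFn]
        exact (hvals _).trans (List.getD_eq_getElem cs 0 h2)
      refine ⟨f, ?_, hΨf⟩
      intro t ht1 ht2
      have hcard : (Finset.univ.filter
          (fun i : Fin n => 1 ≤ (f i + 0).val ∧ (f i + 0).val ≤ t)).card
          = cs.countP (fun c => decide (c ≤ t)) := by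
        rw [← hΨf, hΨdef]
        simp only
        rw [countP_ofFn, Finset.card_filter]
        apply Finset.sum_congr rfl
        intro i _
        have h1 : 1 ≤ cs.getD i.val 0 := by
          rw [hgetlt i]
          exact hpos _ (List.getElem_mem _)
        rw [add_zero, hvals i]
        simp only [decide_eq_true_eq]
        congr 1
        · rw [eq_iff_iff]
          constructor
          · rintro ⟨-, h⟩; exact h
          · intro h; exact ⟨h1, h⟩
      rw [hcard]
      exact hcnt t (by omega)
    · rintro ⟨f, hGood, hΨf⟩
      have hv1 : ∀ i : Fin n, 1 ≤ (f i).val ∧ (f i).val ≤ N - 1 := by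
        have h1 := hGood (N - 1) (by omega) (le_refl _)
        have h2 : (Finset.univ.filter
            (fun i : Fin n => 1 ≤ (f i + 0).val ∧ (f i + 0).val ≤ N - 1)).card ≤ n := by
          have := Finset.card_filter_le (Finset.univ : Finset (Fin n))
            (fun i : Fin n => 1 ≤ (f i + 0).val ∧ (f i + 0).val ≤ N - 1)
          simpa using this
        have h3 : (Finset.univ.filter
            (fun i : Fin n => 1 ≤ (f i + 0).val ∧ (f i + 0).val ≤ N - 1)).card = n := by omega
        have h4 : (Finset.univ.filter
            (fun i : Fin n => 1 ≤ (f i + 0).val ∧ (f i + 0).val ≤ N - 1)) = Finset.univ :=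
          Finset.eq_univ_of_card _ (by rw [h3, Fintype.card_fin])
        intro i
        have hi := Finset.mem_filter.mp (by rw [h4]; exact Finset.mem_univ i)
        simpa using hi.2
      subst hΨf
      have hlen : (Ψ f).length = n := by simp [hΨdef]
      have hmem : ∀ c ∈ Ψ f, ∃ i : Fin n, (f i).val = c := by
        intro c hc
        rw [hΨdef] at hc
        simp only [List.mem_ofFn, Set.mem_range] at hc
        exact hc
      refine ⟨hlen, ?_, ?_⟩
      · intro c hc
        obtain ⟨i, rfl⟩ := hmem c hc
        exact (hv1 i).1
      · intro t ht
        rcases Nat.eq_zero_or_pos t with rfl | ht1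
        · omega
        · have := hGood t ht1 (by omega)
          have hcard : (Finset.univ.filter
              (fun i : Fin n => 1 ≤ (f i + 0).val ∧ (f i + 0).val ≤ t)).card
              = (Ψ f).countP (fun c => decide (c ≤ t)) := by
            rw [hΨdef]
            simp only
            rw [countP_ofFn, Finset.card_filter]
            apply Finset.sum_congr rfl
            intro i _
            rw [add_zero]
            simp only [decide_eq_true_eq]
            congr 1
            rw [eq_iff_iff]
            constructor
            · rintro ⟨-, h⟩; exact h
            · intro h; exact ⟨(hv1 i).1, h⟩
          omega
  rw [hseteq, Set.ncard_image_of_injOn, Set.ncard_coe_finset]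
  · rw [hTdef, goodfun_card hn hz hNdef]
  · intro f _ g _ hfg
    rw [hΨdef] at hfg
    simp only at hfg
    rw [List.ofFn_inj] at hfg
    funext i
    apply ZMod.val_injective
    exact congrFun hfg i

/- ## k < n : counting the pointwise set -/

lemma pointwise_ncard (k z : ℕ) :
    {cs : List ℕ | cs.length = k ∧ ∀ p, p < k → 1 ≤ cs.getD p 0 ∧ cs.getD p 0 ≤ z + p}.ncard
      = ∏ i ∈ Finset.range k, (z + i) := by
  classical
  set H := Fintype.piFinset (fun i : Fin k => Finset.Icc 1 (z + i.val)) with hHdef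
  have hseteq : {cs : List ℕ | cs.length = k ∧
      ∀ p, p < k → 1 ≤ cs.getD p 0 ∧ cs.getD p 0 ≤ z + p}
      = (fun f : Fin k → ℕ => List.ofFn f) '' ↑H := by
    ext cs
    simp only [Set.mem_setOf_eq, Set.mem_image, Finset.mem_coe, hHdef,
      Fintype.mem_piFinset, Finset.mem_Icc]
    constructor
    · rintro ⟨hlen, hbd⟩
      refine ⟨fun i => cs.getD i.val 0, fun i => hbd i.val i.isLt, ?_⟩
      apply List.ext_getElem (by simp [hlen])
      intro p h1 h2
      rw [List.getElem_ofFn]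
      show cs.getD p 0 = cs[p]
      exact List.getD_eq_getElem cs 0 h2
    · rintro ⟨f, hf, rfl⟩
      refine ⟨by simp, fun p hp => ?_⟩
      have hplen : p < (List.ofFn f).length := by simp [hp]
      rw [List.getD_eq_getElem _ _ hplen, List.getElem_ofFn]
      exact hf _
  rw [hseteq, Set.ncard_image_of_injOn (fun f _ g _ h => List.ofFn_inj.mp h),
    Set.ncard_coe_finset, hHdef, Fintype.card_piFinset]
  rw [← Fin.prod_univ_eq_prod_range (fun i => z + i) k]
  apply Finset.prod_congr rfl
  intro i _
  rw [Nat.card_Icc]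
  omega

/- ## Assembly lemmas -/

lemma pointwise_isparking (z : ℕ) (hz : 1 ≤ z) (cs ys : List ℕ)
    (hlen : cs.length = ys.length) (hys : ∀ y ∈ ys, 1 ≤ y)
    (hbd : ∀ p, p < cs.length → 1 ≤ cs.getD p 0 ∧ cs.getD p 0 ≤ z + p) :
    IsParkingSeq ys cs z := by
  refine ⟨hlen, ?_, ?_⟩
  · intro c hc
    obtain ⟨p, hp, hpc⟩ := List.mem_iff_getElem.mp hc
    have := hbd p hp
    rw [List.getD_eq_getElem _ _ hp, hpc] at this
    exact this.1
  · rw [parkResult, parkAux_interval ys cs z (z - 1 + ys.sum) hz (by omega) hlen hys hbd]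
    simp

lemma length_le_sum : ∀ l : List ℕ, (∀ x ∈ l, 1 ≤ x) → l.length ≤ l.sum := by
  intro l
  induction l with
  | nil => simp
  | cons c t ih =>
    intro h
    have := ih (fun x hx => h x (by simp [hx]))
    have := h c (by simp)
    simp only [List.length_cons, List.sum_cons]
    omega

lemma all_one_of_sum_eq : ∀ l : List ℕ, (∀ x ∈ l, 1 ≤ x) → l.sum = l.length →
    ∀ x ∈ l, x = 1 := by
  intro l
  induction l with
  | nil => simp
  | cons c t ih =>
    intro hpos hsum x hx
    have hc := hpos c (by simp)
    have ht := length_le_sum t (fun y hy => hpos y (by simp [hy]))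
    simp only [List.sum_cons, List.length_cons] at hsum
    rcases List.mem_cons.mp hx with rfl | hx
    · omega
    · exact ih (fun y hy => hpos y (by simp [hy])) (by omega) x hx

lemma strong_allones (n z : ℕ) (cs : List ℕ) :
    StrongParkingSeq (List.replicate n 1) cs z ↔ IsParkingSeq (List.replicate n 1) cs z := by
  constructor
  · intro h; exact h _ (List.Perm.refl _)
  · intro h ys' hperm
    have : ys' = List.replicate n 1 := List.eq_replicate_iff.mpr
      ⟨hperm.length_eq.trans (by simp),
       fun b hb => List.eq_of_mem_replicate (hperm.subset hb)⟩
    rw [this]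
    exact h

lemma strong_iff_pointwise (k n z : ℕ) (hk1 : 1 ≤ k) (hkn : k < n) (hz : 1 ≤ z)
    (cs : List ℕ) :
    StrongParkingSeq (List.replicate (k-1) 1 ++ [n-k+1]) cs z ↔
      (cs.length = k ∧ ∀ p, p < k → 1 ≤ cs.getD p 0 ∧ cs.getD p 0 ≤ z + p) := by
  set m := n - k + 1 with hmdef
  have hm2 : 2 ≤ m := by omega
  set y0 := List.replicate (k-1) 1 ++ [m] with hy0def
  have hy0len : y0.length = k := by simp [hy0def]; omega
  have hy0sum : y0.sum = n := by
    simp [hy0def, List.sum_replicate]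
    omega
  have hy0pos : ∀ y ∈ y0, 1 ≤ y := by
    intro y hy
    rw [hy0def, List.mem_append] at hy
    rcases hy with hy | hy
    · rw [List.eq_of_mem_replicate hy]
    · simp only [List.mem_singleton] at hy
      omega
  constructor
  · intro hS
    obtain ⟨hlen0, hpos, -⟩ := hS y0 (List.Perm.refl _)
    rw [hy0len] at hlen0
    have hperm0 : y0.Perm (m :: List.replicate (k-1) 1) := by
      rw [hy0def]
      have := List.perm_middle (a := m) (l₁ := List.replicate (k-1) 1) (l₂ := ([] : List ℕ))
      simpa using this
    have hbigs : ∀ p q, p + q + 1 = cs.length →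
        (parkAux (z - 1 + n) (Finset.Ico 1 z) cs
          (List.replicate p 1 ++ m :: List.replicate q 1)).isSome = true := by
      intro p q hpq
      set ys' := List.replicate p 1 ++ m :: List.replicate q 1 with hys'def
      have hys'perm : ys'.Perm y0 := by
        have h1 : ys'.Perm (m :: (List.replicate p 1 ++ List.replicate q 1)) :=
          List.perm_middle
        rw [← List.replicate_add] at h1
        have hpq' : p + q = k - 1 := by omega
        rw [hpq'] at h1
        exact h1.trans hperm0.symm
      obtain ⟨-, -, hsome⟩ := hS ys' hys'perm
      rw [parkResult] at hsome
      have hsum' : ys'.sum = n := (hys'perm.sum_eq).trans hy0sum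
      rwa [hsum'] at hsome
    have hbounds := mustBeLow cs z (z - 1 + n) m hm2 hz (by omega) hpos hbigs
    refine ⟨hlen0, fun p hp => ?_⟩
    have hp' : p < cs.length := by omega
    refine ⟨?_, hbounds p hp'⟩
    rw [List.getD_eq_getElem _ _ hp']
    exact hpos _ (List.getElem_mem _)
  · rintro ⟨hlen, hbd⟩ ys' hperm
    apply pointwise_isparking z hz cs ys'
    · rw [hlen, hperm.length_eq, hy0len]
    · intro y hy
      exact hy0pos y (hperm.subset hy)
    · rw [hlen]
      exact hbd

theorem stmt19 (n k z : ℕ) (hk1 : 1 ≤ k) (hkn : k ≤ n) (hz : 0 < z) :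
    {cs : List ℕ | ∀ ys : List ℕ, ys.length = k → (∀ y ∈ ys, 1 ≤ y) → ys.sum = n →
        StrongParkingSeq ys cs z} =
      {cs : List ℕ | StrongParkingSeq (List.replicate (k - 1) 1 ++ [n - k + 1]) cs z} ∧
    (k < n → {cs : List ℕ |
        StrongParkingSeq (List.replicate (k - 1) 1 ++ [n - k + 1]) cs z}.ncard
        = ∏ i ∈ Finset.range k, (z + i)) ∧
    (k = n → {cs : List ℕ |
        StrongParkingSeq (List.replicate (k - 1) 1 ++ [n - k + 1]) cs z}.ncard
        = z * (n + z) ^ (n - 1)) := by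
  have hy0len : (List.replicate (k - 1) 1 ++ [n - k + 1]).length = k := by simp; omega
  have hy0sum : (List.replicate (k - 1) 1 ++ [n - k + 1]).sum = n := by
    simp [List.sum_replicate]; omega
  have hy0pos : ∀ y ∈ List.replicate (k - 1) 1 ++ [n - k + 1], 1 ≤ y := by
    intro y hy
    rw [List.mem_append] at hy
    rcases hy with hy | hy
    · rw [List.eq_of_mem_replicate hy]
    · simp only [List.mem_singleton] at hy
      omega
  have hy0n : k = n → List.replicate (k - 1) 1 ++ [n - k + 1] = List.replicate n 1 := by
    intro hk
    have h1 : n - k + 1 = 1 := by omega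
    rw [h1, show [1] = List.replicate 1 1 from rfl, ← List.replicate_add]
    congr 1
    omega
  refine ⟨?_, ?_, ?_⟩
  · -- set equality
    ext cs
    simp only [Set.mem_setOf_eq]
    constructor
    · intro h
      exact h _ hy0len hy0pos hy0sum
    · intro h ys hyslen hyspos hyssum
      rcases Nat.lt_or_ge k n with hlt | hge
      · rw [strong_iff_pointwise k n z hk1 hlt hz cs] at h
        intro ys' hperm
        apply pointwise_isparking z hz cs ys'
        · rw [h.1, hperm.length_eq, hyslen]
        · intro y hy
          exact hyspos y (hperm.subset hy)
        · rw [h.1]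
          exact h.2
      · have hk : k = n := by omega
        have hys1 : ys = List.replicate n 1 := by
          apply List.eq_replicate_iff.mpr
          refine ⟨by omega, ?_⟩
          apply all_one_of_sum_eq ys hyspos
          omega
        rw [hys1, ← hy0n hk]
        exact h
  · -- k < n count
    intro hlt
    have : {cs : List ℕ | StrongParkingSeq (List.replicate (k - 1) 1 ++ [n - k + 1]) cs z}
        = {cs : List ℕ | cs.length = k ∧
            ∀ p, p < k → 1 ≤ cs.getD p 0 ∧ cs.getD p 0 ≤ z + p} := by
      ext cs
      simp only [Set.mem_setOf_eq]
      exact strong_iff_pointwise k n z hk1 hlt hz cs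
    rw [this, pointwise_ncard]
  · -- k = n count
    intro hk
    have hn1 : 1 ≤ n := by omega
    have : {cs : List ℕ | StrongParkingSeq (List.replicate (k - 1) 1 ++ [n - k + 1]) cs z}
        = {cs : List ℕ | IsParkingSeq (List.replicate n 1) cs z} := by
      ext cs
      rw [Set.mem_setOf_eq, Set.mem_setOf_eq, hy0n hk, strong_allones]
    rw [this, allones_ncard n z hn1 hz]
end
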